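/- arXiv:1010.2565 — 3 statements merged into one kernel-verified Lean document; each statement's English description precedes it below -/
import Mathlib

section
/- For 2 ≤ i < j ≤ n, let Top(i;n) be the number of permutations in S_n having i as a descent top, Top(j;n) the number having j as a descent top, and Top(i,j;n) the number having both i and j as descent tops. Then Top(i;n)·Top(j;n) ≥ n!·Top(i,j;n); equivalently, occurrences of descent tops in a uniformly random permutation of {1,…,n} are pairwise negatively correlated. -/
/-- `a` is a descent top of `σ`: some position is occupied by `a` and the next
position holds a smaller value. -/
def IsDescentTop {n : ℕ} (σ : Equiv.Perm (Fin n)) (a : Fin n) : Prop :=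
  ∃ i : Fin n, ∃ h : (i : ℕ) + 1 < n, σ i = a ∧ σ ⟨(i : ℕ) + 1, h⟩ < a

open Classical in
/-- `TopCount(a;n)`: the number of permutations in `S_n` having `a` as a descent top. -/
noncomputable def TopCount {n : ℕ} (a : Fin n) : ℕ :=
  (Finset.univ.filter fun σ : Equiv.Perm (Fin n) => IsDescentTop σ a).card

open Classical in
/-- `TopCount(a,b;n)`: the number of permutations in `S_n` having both `a` and `b`
as descent tops. -/
noncomputable def TopCount₂ {n : ℕ} (a b : Fin n) : ℕ :=
  (Finset.univ.filter fun σ : Equiv.Perm (Fin n) =>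
    IsDescentTop σ a ∧ IsDescentTop σ b).card


open Finset Equiv
open scoped Classical

variable {n : ℕ}

/-- number of permutations prescribed on a finset `s` by an injective assignment -/
lemma card_perm_fix (s : Finset (Fin n)) (f : Fin n → Fin n) (hf : Set.InjOn f s) :
    (univ.filter fun σ : Perm (Fin n) => ∀ x ∈ s, σ x = f x).card
      = (n - s.card).factorial := by
  classical
  set t : Finset (Fin n) := s.image f with ht
  have hcard : t.card = s.card := Finset.card_image_of_injOn hf
  -- the equivalence between s and t given by f
  have hg : ∀ x : {x // x ∈ s}, f x.1 ∈ t := fun x => Finset.mem_image_of_mem f x.2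
  let g : {x // x ∈ s} → {x // x ∈ t} := fun x => ⟨f x.1, hg x⟩
  have hginj : Function.Injective g := by
    intro x y hxy
    have : f x.1 = f y.1 := congrArg Subtype.val hxy
    exact Subtype.ext (hf x.2 y.2 this)
  have hcards : Fintype.card {x // x ∈ s} = Fintype.card {x // x ∈ t} := by
    simp [Fintype.card_coe, hcard]
  have hgbij : Function.Bijective g :=
    (Fintype.bijective_iff_injective_and_card g).2 ⟨hginj, hcards⟩
  let e1 : {x // x ∈ s} ≃ {x // x ∈ t} := Equiv.ofBijective g hgbij
  let σ₀ : Perm (Fin n) := e1.extendSubtype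
  have hσ₀ : ∀ x ∈ s, σ₀ x = f x := by
    intro x hx
    have := e1.extendSubtype_apply_of_mem x hx
    simpa [e1, g] using this
  -- bijection between the filter set and the stabilizer
  have key : (univ.filter fun σ : Perm (Fin n) => ∀ x ∈ s, σ x = f x).card
      = (univ.filter fun τ : Perm (Fin n) => ∀ x ∈ s, τ x = x).card := by
    apply Finset.card_nbij' (fun σ => σ₀⁻¹ * σ) (fun τ => σ₀ * τ)
    · intro σ hσ
      simp only [mem_coe, Finset.mem_filter, Finset.mem_univ, true_and] at hσ ⊢
      intro x hx
      simp [Perm.mul_apply, hσ x hx, ← hσ₀ x hx]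
    · intro τ hτ
      simp only [mem_coe, Finset.mem_filter, Finset.mem_univ, true_and] at hτ ⊢
      intro x hx
      simp [Perm.mul_apply, hτ x hx, hσ₀ x hx]
    · intro σ _; simp [mul_assoc]
    · intro τ _; simp [← mul_assoc]
  rw [key]
  -- the stabilizer has (n - s.card)! elements
  have : (univ.filter fun τ : Perm (Fin n) => ∀ x ∈ s, τ x = x).card
      = Fintype.card {f : Perm (Fin n) // ∀ a, ¬(a ∉ s) → f a = a} := by
    rw [Fintype.card_subtype]
    congr 1
    apply Finset.filter_congr
    intro τ _
    constructor
    · intro h a ha; exact h a (not_not.1 ha)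
    · intro h x hx; exact h x (not_not_intro hx)
  rw [this, ← Fintype.card_congr (Equiv.Perm.subtypeEquivSubtypePerm (fun a => a ∉ s)),
    Fintype.card_perm]
  congr 1
  rw [Fintype.card_subtype_compl]
  simp [Fintype.card_coe, Fintype.card_fin]

lemma card_pos_filter (c : ℕ) :
    (univ.filter fun i : Fin n => (i : ℕ) + c < n).card = n - c := by
  classical
  rw [show n - c = (Finset.range (n - c)).card from (Finset.card_range _).symm]
  apply Finset.card_bij (fun (i : Fin n) _ => (i : ℕ))
  · intro i hi
    simp only [Finset.mem_filter] at hi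
    simp only [Finset.mem_range]
    omega
  · intro i hi j hj hij
    exact Fin.ext hij
  · intro j hj
    simp only [Finset.mem_range] at hj
    refine ⟨⟨j, by omega⟩, ?_, rfl⟩
    simp only [Finset.mem_filter, Finset.mem_univ, true_and]
    omega

lemma card_lt_filter (a : Fin n) :
    (univ.filter fun x : Fin n => x < a).card = (a : ℕ) := by
  classical
  rw [show (a : ℕ) = (Finset.range a).card from (Finset.card_range _).symm]
  apply Finset.card_bij (fun (i : Fin n) _ => (i : ℕ))
  · intro i hi
    simp only [Finset.mem_filter, Fin.lt_def] at hi
    simp only [Finset.mem_range]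
    omega
  · intro i hi j hj hij
    exact Fin.ext hij
  · intro j hj
    simp only [Finset.mem_range] at hj
    refine ⟨⟨j, by omega⟩, ?_, rfl⟩
    simp only [Finset.mem_filter, Finset.mem_univ, true_and, Fin.lt_def]
    omega

/-- `v` immediately follows `u` in the word of `σ`. -/
def AdjP (σ : Perm (Fin n)) (u v : Fin n) : Prop :=
  ∃ i : Fin n, ∃ h : (i : ℕ) + 1 < n, σ i = u ∧ σ ⟨(i : ℕ) + 1, h⟩ = v

lemma adjP_unique {σ : Perm (Fin n)} {u x y : Fin n} (hx : AdjP σ u x) (hy : AdjP σ u y) :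
    x = y := by
  obtain ⟨i, hi, hiu, hix⟩ := hx
  obtain ⟨j, hj, hju, hjy⟩ := hy
  have hij : i = j := σ.injective (hiu.trans hju.symm)
  subst hij
  rw [← hix, ← hjy]

noncomputable def adjB (u v : Fin n) (i : Fin n) : Finset (Perm (Fin n)) :=
  univ.filter fun σ => ∃ h : (i : ℕ) + 1 < n, σ i = u ∧ σ ⟨(i : ℕ) + 1, h⟩ = v

lemma card_adjB (u v : Fin n) (huv : u ≠ v) (i : Fin n) :
    (adjB u v i).card = if (i : ℕ) + 1 < n then (n - 2).factorial else 0 := by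
  classical
  by_cases h : (i : ℕ) + 1 < n
  · rw [if_pos h]
    set j : Fin n := ⟨(i : ℕ) + 1, h⟩ with hj
    have hij : i ≠ j := by
      intro he
      have := congrArg Fin.val he
      simp [hj] at this
    have heq : adjB u v i
        = univ.filter fun σ : Perm (Fin n) =>
            ∀ x ∈ ({i, j} : Finset (Fin n)), σ x = (fun x => if x = i then u else v) x := by
      ext σ
      simp only [adjB, Finset.mem_filter, Finset.mem_univ, true_and, Finset.mem_insert,
        Finset.mem_singleton]
      constructor
      · rintro ⟨h', h1, h2⟩
        intro x hx
        rcases hx with rfl | rfl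
        · simp [h1]
        · simp [hij.symm, h2]; exact h2
      · intro hall
        refine ⟨h, ?_, ?_⟩
        · have := hall i (Or.inl rfl); simpa using this
        · have := hall j (Or.inr rfl); simpa [hij.symm] using this
    rw [heq, card_perm_fix]
    · congr 2
      rw [Finset.card_insert_of_notMem (by simp [hij]), Finset.card_singleton]
    · intro x hx y hy hxy
      simp only [Finset.coe_insert, Set.mem_insert_iff, Finset.coe_singleton,
        Set.mem_singleton_iff] at hx hy
      rcases hx with rfl | rfl <;> rcases hy with rfl | rfl <;>
        simp_all [hij, hij.symm, huv, huv.symm]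
  · rw [if_neg h]
    rw [Finset.card_eq_zero]
    ext σ
    simp only [adjB, Finset.mem_filter, Finset.notMem_empty, iff_false, not_and,
      Finset.mem_univ, true_and]
    rintro ⟨h', _⟩
    exact h h'

noncomputable def AdjSet (u v : Fin n) : Finset (Perm (Fin n)) :=
  univ.filter fun σ => AdjP σ u v

lemma card_AdjSet (u v : Fin n) (huv : u ≠ v) :
    (AdjSet u v).card = (n - 1) * (n - 2).factorial := by
  classical
  have hunion : AdjSet u v = univ.biUnion (adjB u v) := by
    ext σ
    simp [AdjSet, adjB, AdjP]
  rw [hunion, Finset.card_biUnion]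
  · rw [Finset.sum_congr rfl (fun i _ => card_adjB u v huv i)]
    rw [Finset.sum_ite, Finset.sum_const, Finset.sum_const_zero, add_zero]
    simp only [smul_eq_mul]
    congr 1
    have := card_pos_filter (n := n) 1
    simpa using this
  · intro i _ j _ hij
    simp only [Finset.disjoint_left]
    intro σ hσi hσj
    simp only [adjB, Finset.mem_filter, Finset.mem_univ, true_and] at hσi hσj
    obtain ⟨_, h1, _⟩ := hσi
    obtain ⟨_, h2, _⟩ := hσj
    exact hij (σ.injective (h1.trans h2.symm))

/-- counting the valid position pairs for two disjoint adjacent blocks -/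
lemma card_VP :
    ((univ : Finset (Fin n × Fin n)).filter fun pq =>
        (pq.1 : ℕ) + 1 < n ∧ (pq.2 : ℕ) + 1 < n ∧ pq.1 ≠ pq.2 ∧
          (pq.2 : ℕ) ≠ (pq.1 : ℕ) + 1 ∧ (pq.1 : ℕ) ≠ (pq.2 : ℕ) + 1).card
      = (n - 2) * (n - 3) := by
  classical
  set S : Finset (Fin n × Fin n) :=
    univ.filter (fun pq => (pq.1 : ℕ) + 1 < n ∧ (pq.2 : ℕ) + 1 < n) with hS
  have hTeq : ((univ : Finset (Fin n × Fin n)).filter fun pq =>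
        (pq.1 : ℕ) + 1 < n ∧ (pq.2 : ℕ) + 1 < n ∧ pq.1 ≠ pq.2 ∧
          (pq.2 : ℕ) ≠ (pq.1 : ℕ) + 1 ∧ (pq.1 : ℕ) ≠ (pq.2 : ℕ) + 1)
      = S.filter (fun pq => pq.1 ≠ pq.2 ∧
          (pq.2 : ℕ) ≠ (pq.1 : ℕ) + 1 ∧ (pq.1 : ℕ) ≠ (pq.2 : ℕ) + 1) := by
    rw [hS, Finset.filter_filter]
    apply Finset.filter_congr
    intro pq _
    tauto
  rw [hTeq]
  have hcardS : S.card = (n - 1) * (n - 1) := by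
    have : S = (univ.filter fun i : Fin n => (i : ℕ) + 1 < n) ×ˢ
        (univ.filter fun i : Fin n => (i : ℕ) + 1 < n) := by
      ext ⟨p, q⟩
      simp [hS]
    rw [this, Finset.card_product, card_pos_filter]
  -- the bad set
  have hsplit := Finset.card_filter_add_card_filter_not
    (s := S) (p := fun pq => pq.1 ≠ pq.2 ∧
      (pq.2 : ℕ) ≠ (pq.1 : ℕ) + 1 ∧ (pq.1 : ℕ) ≠ (pq.2 : ℕ) + 1)
  have hbad : (S.filter fun pq => ¬(pq.1 ≠ pq.2 ∧
      (pq.2 : ℕ) ≠ (pq.1 : ℕ) + 1 ∧ (pq.1 : ℕ) ≠ (pq.2 : ℕ) + 1)).card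
      = (n - 1) + ((n - 2) + (n - 2)) := by
    have hb : (S.filter fun pq => ¬(pq.1 ≠ pq.2 ∧
        (pq.2 : ℕ) ≠ (pq.1 : ℕ) + 1 ∧ (pq.1 : ℕ) ≠ (pq.2 : ℕ) + 1))
        = S.filter (fun pq => pq.1 = pq.2) ∪
          (S.filter (fun pq => (pq.2 : ℕ) = (pq.1 : ℕ) + 1) ∪
            S.filter (fun pq => (pq.1 : ℕ) = (pq.2 : ℕ) + 1)) := by
      ext pq
      simp only [Finset.mem_filter, Finset.mem_union]
      constructor
      · rintro ⟨hs, h⟩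
        push_neg at h
        by_cases h1 : pq.1 = pq.2
        · exact Or.inl ⟨hs, h1⟩
        · by_cases h2 : (pq.2 : ℕ) = (pq.1 : ℕ) + 1
          · exact Or.inr (Or.inl ⟨hs, h2⟩)
          · exact Or.inr (Or.inr ⟨hs, h h1 h2⟩)
      · rintro (⟨hs, h⟩ | ⟨hs, h⟩ | ⟨hs, h⟩) <;>
          exact ⟨hs, by tauto⟩
    rw [hb]
    rw [Finset.card_union_of_disjoint, Finset.card_union_of_disjoint]
    · congr 1
      · -- diagonal: card = n - 1
        rw [← card_pos_filter (n := n) 1]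
        apply Finset.card_bij (fun pq _ => pq.1)
        · intro pq hpq
          simp only [Finset.mem_filter, hS, Finset.mem_univ, true_and] at hpq ⊢
          exact hpq.1.1
        · intro pq hpq pq' hpq' h
          simp only [Finset.mem_filter, hS, Finset.mem_univ, true_and] at hpq hpq'
          exact Prod.ext h (by rw [← hpq.2, ← hpq'.2, h])
        · intro i hi
          simp only [Finset.mem_filter, Finset.mem_univ, true_and] at hi
          exact ⟨(i, i), by simp [hS, hi], rfl⟩
      · congr 1
        · -- q = p + 1 : card = n - 2
          rw [← card_pos_filter (n := n) 2]
          apply Finset.card_bij (fun pq _ => pq.1)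
          · intro pq hpq
            simp only [Finset.mem_filter, hS, Finset.mem_univ, true_and] at hpq ⊢
            omega
          · intro pq hpq pq' hpq' h
            simp only [Finset.mem_filter, hS, Finset.mem_univ, true_and] at hpq hpq'
            refine Prod.ext h (Fin.ext ?_)
            omega
          · intro i hi
            simp only [Finset.mem_filter, Finset.mem_univ, true_and] at hi
            exact ⟨(i, ⟨(i : ℕ) + 1, by omega⟩), by simp [hS]; omega, rfl⟩
        · -- p = q + 1 : card = n - 2
          rw [← card_pos_filter (n := n) 2]
          apply Finset.card_bij (fun pq _ => pq.2)
          · intro pq hpq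
            simp only [Finset.mem_filter, hS, Finset.mem_univ, true_and] at hpq ⊢
            omega
          · intro pq hpq pq' hpq' h
            simp only [Finset.mem_filter, hS, Finset.mem_univ, true_and] at hpq hpq'
            refine Prod.ext (Fin.ext ?_) h
            omega
          · intro i hi
            simp only [Finset.mem_filter, Finset.mem_univ, true_and] at hi
            exact ⟨(⟨(i : ℕ) + 1, by omega⟩, i), by simp [hS]; omega, rfl⟩
    · -- disjointness of the last two
      rw [Finset.disjoint_left]
      intro pq h1 h2
      simp only [Finset.mem_filter] at h1 h2
      omega
    · -- disjointness of diagonal with the union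
      rw [Finset.disjoint_left]
      intro pq h1 h2
      simp only [Finset.mem_filter, Finset.mem_union] at h1 h2
      have := h1.2
      have hv : (pq.1 : ℕ) = (pq.2 : ℕ) := by rw [h1.2]
      rcases h2 with h2 | h2 <;> · have := h2.2; omega
  have harith : (n - 1) * (n - 1) - ((n - 1) + ((n - 2) + (n - 2))) = (n - 2) * (n - 3) := by
    rcases n with _ | _ | _ | m
    · rfl
    · rfl
    · rfl
    · have h1 : m + 3 - 1 = m + 2 := by omega
      have h2 : m + 3 - 2 = m + 1 := by omega
      have h3 : m + 3 - 3 = m := by omega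
      rw [h1, h2, h3]
      have : (m + 2) * (m + 2) = ((m + 2) + ((m + 1) + (m + 1))) + (m + 1) * m := by ring
      rw [this]
      exact Nat.add_sub_cancel_left _ _
  omega

/-- the quadruple blocks -/
lemma card_quadB (a b x y : Fin n) (hab : a ≠ b) (hax : a ≠ x) (hay : a ≠ y)
    (hxb : x ≠ b) (hxy : x ≠ y) (hby : b ≠ y) (p q : Fin n) :
    (univ.filter fun σ : Perm (Fin n) => ∃ hp : (p : ℕ) + 1 < n, ∃ hq : (q : ℕ) + 1 < n,
        σ p = a ∧ σ ⟨(p : ℕ) + 1, hp⟩ = x ∧ σ q = b ∧ σ ⟨(q : ℕ) + 1, hq⟩ = y).card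
      = if (p : ℕ) + 1 < n ∧ (q : ℕ) + 1 < n ∧ p ≠ q ∧
            (q : ℕ) ≠ (p : ℕ) + 1 ∧ (p : ℕ) ≠ (q : ℕ) + 1
        then (n - 4).factorial else 0 := by
  classical
  split_ifs with hc
  · obtain ⟨hp, hq, hpq, hq1, hp1⟩ := hc
    set p' : Fin n := ⟨(p : ℕ) + 1, hp⟩ with hp'
    set q' : Fin n := ⟨(q : ℕ) + 1, hq⟩ with hq'
    have h1 : p ≠ p' := by
      intro h; have := congrArg Fin.val h; simp only [hp'] at this; omega
    have h2 : p ≠ q' := by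
      intro h; have := congrArg Fin.val h; simp only [hq'] at this; omega
    have h3 : p' ≠ q := by
      intro h; have := congrArg Fin.val h; simp only [hp'] at this; omega
    have h4 : p' ≠ q' := by
      intro h; have := congrArg Fin.val h; simp only [hp', hq'] at this
      exact hpq (Fin.ext (by omega))
    have h5 : q ≠ q' := by
      intro h; have := congrArg Fin.val h; simp only [hq'] at this; omega
    set f : Fin n → Fin n := fun z => if z = p then a else if z = p' then x else
      if z = q then b else y with hf
    have heq : (univ.filter fun σ : Perm (Fin n) => ∃ hp : (p : ℕ) + 1 < n,
          ∃ hq : (q : ℕ) + 1 < n,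
          σ p = a ∧ σ ⟨(p : ℕ) + 1, hp⟩ = x ∧ σ q = b ∧ σ ⟨(q : ℕ) + 1, hq⟩ = y)
        = univ.filter fun σ : Perm (Fin n) =>
            ∀ z ∈ ({p, p', q, q'} : Finset (Fin n)), σ z = f z := by
      apply Finset.filter_congr
      intro σ _
      simp only [Finset.mem_insert, Finset.mem_singleton]
      constructor
      · rintro ⟨_, _, e1, e2, e3, e4⟩ z hz
        rcases hz with rfl | rfl | rfl | rfl
        · simp [hf, e1]
        · simp [hf, h1.symm, e2]; exact e2
        · simp [hf, hpq.symm, h3.symm, e3]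
        · simp [hf, h2.symm, h4.symm, h5.symm, e4]; exact e4
      · intro hall
        refine ⟨hp, hq, ?_, ?_, ?_, ?_⟩
        · have := hall p (by tauto); simpa [hf] using this
        · have := hall p' (by tauto); simpa [hf, h1.symm] using this
        · have := hall q (by tauto); simpa [hf, hpq.symm, h3.symm] using this
        · have := hall q' (by tauto); simpa [hf, h2.symm, h4.symm, h5.symm] using this
    rw [heq, card_perm_fix]
    · congr 2
      rw [Finset.card_insert_of_notMem (by simp [h1, h2, hpq]),
        Finset.card_insert_of_notMem (by simp [h3, h4]),
        Finset.card_insert_of_notMem (by simp [h5]), Finset.card_singleton]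
    · intro z hz w hw hzw
      simp only [Finset.coe_insert, Set.mem_insert_iff, Finset.coe_singleton,
        Set.mem_singleton_iff] at hz hw
      rcases hz with rfl | rfl | rfl | rfl <;> rcases hw with rfl | rfl | rfl | rfl <;>
        first
        | rfl
        | (exfalso; simp only [hf] at hzw; clear hp' hq'; split_ifs at hzw <;> simp_all)
  · rw [Finset.card_eq_zero, Finset.eq_empty_iff_forall_notMem]
    intro σ hσ
    simp only [Finset.mem_filter, Finset.mem_univ, true_and] at hσ
    obtain ⟨hp, hq, e1, e2, e3, e4⟩ := hσ
    apply hc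
    refine ⟨hp, hq, ?_, ?_, ?_⟩
    · intro h; subst h; exact hab (e1.symm.trans e3)
    · intro h
      have : (⟨(p : ℕ) + 1, hp⟩ : Fin n) = q := Fin.ext h.symm
      rw [this] at e2
      exact hxb (e2.symm.trans e3)
    · intro h
      have : (⟨(q : ℕ) + 1, hq⟩ : Fin n) = p := Fin.ext h.symm
      rw [this] at e4
      exact hay (e1.symm.trans e4)

/-- the generic disjoint-blocks intersection count -/
lemma card_Q_quad (a b x y : Fin n) (hab : a ≠ b) (hax : a ≠ x) (hay : a ≠ y)
    (hxb : x ≠ b) (hxy : x ≠ y) (hby : b ≠ y) :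
    (univ.filter fun σ : Perm (Fin n) => AdjP σ a x ∧ AdjP σ b y).card
      = (n - 2) * (n - 3) * (n - 4).factorial := by
  classical
  have hunion : (univ.filter fun σ : Perm (Fin n) => AdjP σ a x ∧ AdjP σ b y)
      = (univ : Finset (Fin n × Fin n)).biUnion (fun pq =>
          univ.filter fun σ : Perm (Fin n) => ∃ hp : (pq.1 : ℕ) + 1 < n,
            ∃ hq : (pq.2 : ℕ) + 1 < n, σ pq.1 = a ∧ σ ⟨(pq.1 : ℕ) + 1, hp⟩ = x ∧
              σ pq.2 = b ∧ σ ⟨(pq.2 : ℕ) + 1, hq⟩ = y) := by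
    ext σ
    simp only [Finset.mem_biUnion, Finset.mem_filter, Finset.mem_univ, true_and]
    constructor
    · rintro ⟨⟨p, hp, e1, e2⟩, ⟨q, hq, e3, e4⟩⟩
      exact ⟨(p, q), ⟨hp, hq, e1, e2, e3, e4⟩⟩
    · rintro ⟨⟨p, q⟩, hp, hq, e1, e2, e3, e4⟩
      exact ⟨⟨p, hp, e1, e2⟩, ⟨q, hq, e3, e4⟩⟩
  rw [hunion, Finset.card_biUnion]
  · rw [Finset.sum_congr rfl (fun pq _ => card_quadB a b x y hab hax hay hxb hxy hby pq.1 pq.2)]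
    rw [Finset.sum_ite, Finset.sum_const, Finset.sum_const_zero, add_zero]
    simp only [smul_eq_mul]
    rw [card_VP]
  · intro pq _ pq' _ hne
    simp only [Finset.disjoint_left, Finset.mem_filter, Finset.mem_univ, true_and]
    rintro σ ⟨hp, hq, e1, _, e3, _⟩ ⟨hp', hq', e1', _, e3', _⟩
    exact hne (Prod.ext (σ.injective (e1.trans e1'.symm)) (σ.injective (e3.trans e3'.symm)))

/-- triple block count -/
lemma card_tripB (a b x : Fin n) (hba : b ≠ a) (hbx : b ≠ x) (hax : a ≠ x) (q : Fin n) :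
    (univ.filter fun σ : Perm (Fin n) => ∃ h : (q : ℕ) + 2 < n,
        σ q = b ∧ σ ⟨(q : ℕ) + 1, by omega⟩ = a ∧ σ ⟨(q : ℕ) + 2, h⟩ = x).card
      = if (q : ℕ) + 2 < n then (n - 3).factorial else 0 := by
  classical
  split_ifs with hc
  · set q1 : Fin n := ⟨(q : ℕ) + 1, by omega⟩ with hq1
    set q2 : Fin n := ⟨(q : ℕ) + 2, hc⟩ with hq2
    have h1 : q ≠ q1 := by
      intro h; have := congrArg Fin.val h; simp only [hq1] at this; omega
    have h2 : q ≠ q2 := by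
      intro h; have := congrArg Fin.val h; simp only [hq2] at this; omega
    have h3 : q1 ≠ q2 := by
      intro h; have := congrArg Fin.val h; simp only [hq1, hq2] at this; omega
    set f : Fin n → Fin n := fun z => if z = q then b else if z = q1 then a else x with hf
    have heq : (univ.filter fun σ : Perm (Fin n) => ∃ h : (q : ℕ) + 2 < n,
          σ q = b ∧ σ ⟨(q : ℕ) + 1, by omega⟩ = a ∧ σ ⟨(q : ℕ) + 2, h⟩ = x)
        = univ.filter fun σ : Perm (Fin n) =>
            ∀ z ∈ ({q, q1, q2} : Finset (Fin n)), σ z = f z := by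
      apply Finset.filter_congr
      intro σ _
      simp only [Finset.mem_insert, Finset.mem_singleton]
      constructor
      · rintro ⟨_, e1, e2, e3⟩ z hz
        rcases hz with rfl | rfl | rfl
        · simp [hf, e1]
        · simp [hf, h1.symm, e2]; exact e2
        · simp [hf, h2.symm, h3.symm, e3]; exact e3
      · intro hall
        refine ⟨hc, ?_, ?_, ?_⟩
        · have := hall q (by tauto); simpa [hf] using this
        · have := hall q1 (by tauto); simpa [hf, h1.symm] using this
        · have := hall q2 (by tauto); simpa [hf, h2.symm, h3.symm] using this
    rw [heq, card_perm_fix]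
    · congr 2
      rw [Finset.card_insert_of_notMem (by simp [h1, h2]),
        Finset.card_insert_of_notMem (by simp [h3]), Finset.card_singleton]
    · intro z hz w hw hzw
      simp only [Finset.coe_insert, Set.mem_insert_iff, Finset.coe_singleton,
        Set.mem_singleton_iff] at hz hw
      rcases hz with rfl | rfl | rfl <;> rcases hw with rfl | rfl | rfl <;>
        first
        | rfl
        | (exfalso; simp only [hf] at hzw; clear hq1 hq2; split_ifs at hzw <;> simp_all)
  · rw [Finset.card_eq_zero, Finset.eq_empty_iff_forall_notMem]
    intro σ hσ
    simp only [Finset.mem_filter, Finset.mem_univ, true_and] at hσ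
    obtain ⟨h, _⟩ := hσ
    exact hc h

/-- the overlapping-blocks intersection count -/
lemma card_Q_trip (a b x : Fin n) (hba : b ≠ a) (hbx : b ≠ x) (hax : a ≠ x) :
    (univ.filter fun σ : Perm (Fin n) => AdjP σ a x ∧ AdjP σ b a).card
      = (n - 2) * (n - 3).factorial := by
  classical
  have hunion : (univ.filter fun σ : Perm (Fin n) => AdjP σ a x ∧ AdjP σ b a)
      = (univ : Finset (Fin n)).biUnion (fun q =>
          univ.filter fun σ : Perm (Fin n) => ∃ h : (q : ℕ) + 2 < n,
            σ q = b ∧ σ ⟨(q : ℕ) + 1, by omega⟩ = a ∧ σ ⟨(q : ℕ) + 2, h⟩ = x) := by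
    ext σ
    simp only [Finset.mem_biUnion, Finset.mem_filter, Finset.mem_univ, true_and]
    constructor
    · rintro ⟨⟨p, hp, e1, e2⟩, ⟨q, hq, e3, e4⟩⟩
      have hpq : p = ⟨(q : ℕ) + 1, hq⟩ := σ.injective (e1.trans e4.symm)
      have hq2 : (q : ℕ) + 2 < n := by
        have := hp
        rw [hpq] at this
        simpa using this
      refine ⟨q, hq2, e3, ?_, ?_⟩
      · rw [← e4]
      · rw [← e2]; congr 1; exact Fin.ext (by simp [hpq])
    · rintro ⟨q, hq2, e1, e2, e3⟩
      refine ⟨⟨⟨(q : ℕ) + 1, by omega⟩, by simpa using hq2, e2, ?_⟩,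
        ⟨q, by omega, e1, e2⟩⟩
      rw [← e3]
  rw [hunion, Finset.card_biUnion]
  · rw [Finset.sum_congr rfl (fun q _ => card_tripB a b x hba hbx hax q)]
    rw [Finset.sum_ite, Finset.sum_const, Finset.sum_const_zero, add_zero]
    simp only [smul_eq_mul]
    congr 1
    have := card_pos_filter (n := n) 2
    simpa using this
  · intro q _ q' _ hne
    simp only [Finset.disjoint_left, Finset.mem_filter, Finset.mem_univ, true_and]
    rintro σ ⟨_, e1, _, _⟩ ⟨_, e1', _, _⟩
    exact hne (σ.injective (e1.trans e1'.symm))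

/-- blocks sharing the same second element: impossible -/
lemma card_Q_same (a b x : Fin n) (hab : a ≠ b) :
    (univ.filter fun σ : Perm (Fin n) => AdjP σ a x ∧ AdjP σ b x).card = 0 := by
  classical
  rw [Finset.card_eq_zero, Finset.eq_empty_iff_forall_notMem]
  intro σ hσ
  simp only [Finset.mem_filter, Finset.mem_univ, true_and] at hσ
  obtain ⟨⟨p, hp, e1, e2⟩, ⟨q, hq, e3, e4⟩⟩ := hσ
  have : (⟨(p : ℕ) + 1, hp⟩ : Fin n) = ⟨(q : ℕ) + 1, hq⟩ := σ.injective (e2.trans e4.symm)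
  have hpq : p = q := Fin.ext (by simpa using congrArg Fin.val this)
  rw [hpq] at e1
  exact hab (e1.symm.trans e3)

lemma descent_iff (σ : Perm (Fin n)) (u : Fin n) :
    IsDescentTop σ u ↔ ∃ x, x < u ∧ AdjP σ u x := by
  constructor
  · rintro ⟨i, h, e1, e2⟩
    exact ⟨σ ⟨(i : ℕ) + 1, h⟩, e2, ⟨i, h, e1, rfl⟩⟩
  · rintro ⟨x, hx, i, h, e1, e2⟩
    exact ⟨i, h, e1, by rw [e2]; exact hx⟩


lemma topCount_eq (a : Fin n) :
    TopCount a = (a : ℕ) * ((n - 1) * (n - 2).factorial) := by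
  classical
  rw [TopCount]
  have hunion : (Finset.univ.filter fun σ : Perm (Fin n) => IsDescentTop σ a)
      = (univ.filter fun x : Fin n => x < a).biUnion (fun x => AdjSet a x) := by
    ext σ
    simp only [Finset.mem_biUnion, Finset.mem_filter, Finset.mem_univ, true_and,
      AdjSet, descent_iff]
  rw [hunion, Finset.card_biUnion]
  · rw [Finset.sum_congr rfl (fun x hx => card_AdjSet a x
      (by simp only [Finset.mem_filter] at hx; exact (ne_of_lt hx.2).symm))]
    rw [Finset.sum_const, smul_eq_mul, card_lt_filter]
  · intro x hx y hy hxy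
    simp only [Finset.disjoint_left, AdjSet, Finset.mem_filter, Finset.mem_univ, true_and]
    intro σ h1 h2
    exact hxy (adjP_unique h1 h2)

lemma topCount₂_eq (a b : Fin n) (ha1 : 1 ≤ (a : ℕ)) (hab : a < b) :
    TopCount₂ a b = (a : ℕ) * ((n - 2) * (n - 3).factorial
      + ((b : ℕ) - 2) * ((n - 2) * (n - 3) * (n - 4).factorial)) := by
  classical
  rw [TopCount₂]
  have hab' : a ≠ b := ne_of_lt hab
  have hunion : (Finset.univ.filter fun σ : Perm (Fin n) =>
        IsDescentTop σ a ∧ IsDescentTop σ b)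
      = ((univ.filter fun x : Fin n => x < a) ×ˢ (univ.filter fun y : Fin n => y < b)).biUnion
          (fun xy => univ.filter fun σ : Perm (Fin n) => AdjP σ a xy.1 ∧ AdjP σ b xy.2) := by
    ext σ
    simp only [Finset.mem_biUnion, Finset.mem_filter, Finset.mem_univ, true_and,
      Finset.mem_product, descent_iff]
    constructor
    · rintro ⟨⟨x, hx, hax⟩, ⟨y, hy, hby⟩⟩
      exact ⟨(x, y), ⟨hx, hy⟩, hax, hby⟩
    · rintro ⟨⟨x, y⟩, ⟨hx, hy⟩, hax, hby⟩
      exact ⟨⟨x, hx, hax⟩, ⟨y, hy, hby⟩⟩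
  rw [hunion, Finset.card_biUnion]
  · rw [Finset.sum_product]
    have inner : ∀ x ∈ (univ.filter fun x : Fin n => x < a),
        (∑ y ∈ (univ.filter fun y : Fin n => y < b),
          (univ.filter fun σ : Perm (Fin n) => AdjP σ a x ∧ AdjP σ b y).card)
        = (n - 2) * (n - 3).factorial
            + ((b : ℕ) - 2) * ((n - 2) * (n - 3) * (n - 4).factorial) := by
      intro x hx
      simp only [Finset.mem_filter, Finset.mem_univ, true_and] at hx
      have hxa : x ≠ a := ne_of_lt hx
      have hxb : x < b := lt_trans hx hab
      set Fb := univ.filter fun y : Fin n => y < b with hFb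
      have haFb : a ∈ Fb := by simp [hFb, hab]
      have hxFb : x ∈ Fb.erase a := by simp [hFb, hxa, hxb]
      rw [← Finset.add_sum_erase Fb _ haFb, ← Finset.add_sum_erase (Fb.erase a) _ hxFb]
      rw [card_Q_trip a b x hab'.symm (ne_of_gt hxb) hxa.symm]
      rw [card_Q_same a b x hab']
      have hrest : ∀ y ∈ (Fb.erase a).erase x,
          (univ.filter fun σ : Perm (Fin n) => AdjP σ a x ∧ AdjP σ b y).card
            = (n - 2) * (n - 3) * (n - 4).factorial := by
        intro y hy
        simp only [Finset.mem_erase, hFb, Finset.mem_filter, Finset.mem_univ,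
          true_and] at hy
        obtain ⟨hyx, hya, hyb⟩ := hy
        exact card_Q_quad a b x y hab' hxa.symm (Ne.symm hya) (ne_of_lt hxb)
          (Ne.symm hyx) (ne_of_gt hyb)
      rw [Finset.sum_congr rfl hrest, Finset.sum_const, smul_eq_mul]
      have hcard : ((Fb.erase a).erase x).card = (b : ℕ) - 2 := by
        rw [Finset.card_erase_of_mem hxFb, Finset.card_erase_of_mem haFb]
        rw [hFb, card_lt_filter]
        omega
      rw [hcard, zero_add]
    rw [Finset.sum_congr rfl inner, Finset.sum_const, smul_eq_mul, card_lt_filter]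
  · rintro ⟨x, y⟩ hxy ⟨x', y'⟩ hxy' hne
    simp only [Finset.disjoint_left, Finset.mem_filter, Finset.mem_univ, true_and]
    rintro σ ⟨h1, h2⟩ ⟨h1', h2'⟩
    exact hne (Prod.ext (adjP_unique h1 h1') (adjP_unique h2 h2'))

lemma final_arith (A C k : ℕ) (hC : C ≤ k + 1) :
    (k + 4).factorial * (A * ((k + 2) * (k + 1).factorial
        + C * ((k + 2) * (k + 1) * k.factorial)))
      ≤ (A * ((k + 3) * (k + 2).factorial)) * ((C + 2) * ((k + 3) * (k + 2).factorial)) := by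
  have f1 : (k + 1).factorial = (k + 1) * k.factorial := Nat.factorial_succ k
  have f2 : (k + 2).factorial = (k + 2) * ((k + 1) * k.factorial) := by
    rw [show k + 2 = (k + 1) + 1 from rfl, Nat.factorial_succ, f1]
  have f4 : (k + 4).factorial = (k + 4) * ((k + 3) * ((k + 2) * ((k + 1) * k.factorial))) := by
    rw [show k + 4 = (k + 3) + 1 from rfl, Nat.factorial_succ,
      show k + 3 = (k + 2) + 1 from rfl, Nat.factorial_succ, f2]
  rw [f1, f2, f4]
  have core : (k + 4) * (C + 1) ≤ (k + 3) * (C + 2) := by nlinarith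
  calc (k + 4) * ((k + 3) * ((k + 2) * ((k + 1) * k.factorial)))
        * (A * ((k + 2) * ((k + 1) * k.factorial) + C * ((k + 2) * (k + 1) * k.factorial)))
      = (A * (k + 3) * (k + 2) * (k + 2) * (k + 1) * (k + 1) * k.factorial * k.factorial)
          * ((k + 4) * (C + 1)) := by ring
    _ ≤ (A * (k + 3) * (k + 2) * (k + 2) * (k + 1) * (k + 1) * k.factorial * k.factorial)
          * ((k + 3) * (C + 2)) := Nat.mul_le_mul_left _ core
    _ = A * ((k + 3) * ((k + 2) * ((k + 1) * k.factorial)))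
          * ((C + 2) * ((k + 3) * ((k + 2) * ((k + 1) * k.factorial)))) := by ring

lemma final_arith_zero (A : ℕ) :
    (3 : ℕ).factorial * (A * (1 * Nat.factorial 0 + 0))
      ≤ (A * (2 * Nat.factorial 1)) * (2 * (2 * Nat.factorial 1)) := by
  simp [Nat.factorial]
  nlinarith [Nat.zero_le A]


/-- For `2 ≤ i < j ≤ n` (here `a` and `b` are the elements of `{1,…,n}` with
`2 ≤ a < b`, encoded in `Fin n` with values shifted down by one, so `1 ≤ a.val`):
`TopCount(i;n)·TopCount(j;n) ≥ n!·TopCount(i,j;n)`, i.e. descent tops of a uniformly random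
permutation are pairwise negatively correlated. -/
theorem descent_tops_negatively_correlated (n : ℕ) (a b : Fin n)
    (ha : 1 ≤ (a : ℕ)) (hab : a < b) :
    n.factorial * TopCount₂ a b ≤ TopCount a * TopCount b := by
  have hbn : (b : ℕ) < n := b.isLt
  have hab' : (a : ℕ) < (b : ℕ) := hab
  have hb2 : 2 ≤ (b : ℕ) := by omega
  have hn3 : 3 ≤ n := by omega
  obtain ⟨m, rfl⟩ : ∃ m, n = m + 3 := ⟨n - 3, by omega⟩
  rw [topCount₂_eq a b ha hab, topCount_eq, topCount_eq]
  have r1 : m + 3 - 1 = m + 2 := by omega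
  have r2 : m + 3 - 2 = m + 1 := by omega
  have r3 : m + 3 - 3 = m := by omega
  have r4 : m + 3 - 4 = m - 1 := by omega
  rw [r1, r2, r3, r4]
  obtain ⟨C, hBC⟩ : ∃ C, (b : ℕ) = C + 2 := ⟨(b : ℕ) - 2, by omega⟩
  rw [hBC, Nat.add_sub_cancel]
  have hCm : C ≤ m := by omega
  rcases m with _ | k
  · -- n = 3, C = 0
    obtain rfl : C = 0 := by omega
    calc (0 + 3).factorial * ((a : ℕ) * ((0 + 1) * (0 : ℕ).factorial
          + 0 * ((0 + 1) * 0 * (0 - 1).factorial)))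
        = (3 : ℕ).factorial * ((a : ℕ) * (1 * Nat.factorial 0 + 0)) := by norm_num
      _ ≤ ((a : ℕ) * (2 * Nat.factorial 1)) * (2 * (2 * Nat.factorial 1)) :=
          final_arith_zero (a : ℕ)
      _ = (a : ℕ) * ((0 + 2) * (0 + 1).factorial)
          * ((0 + 2) * ((0 + 2) * (0 + 1).factorial)) := by norm_num
  · -- n = k + 4
    have hr : k + 1 - 1 = k := by omega
    rw [hr]
    have := final_arith (a : ℕ) C k (by omega)
    calc (k + 1 + 3).factorial * ((a : ℕ) * ((k + 1 + 1) * (k + 1).factorial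
          + C * ((k + 1 + 1) * (k + 1) * k.factorial)))
        = (k + 4).factorial * ((a : ℕ) * ((k + 2) * (k + 1).factorial
            + C * ((k + 2) * (k + 1) * k.factorial))) := by ring_nf
      _ ≤ ((a : ℕ) * ((k + 3) * (k + 2).factorial))
            * ((C + 2) * ((k + 3) * (k + 2).factorial)) := this
      _ = (a : ℕ) * ((k + 1 + 2) * (k + 1 + 1).factorial)
            * ((C + 2) * ((k + 1 + 2) * (k + 1 + 1).factorial)) := by ring_nf
end

section
/- Let f(t) and g(t) be complex polynomials of degree n, let φ(t) = (at+b)/(ct+d) be a Möbius transformation (ad − bc ≠ 0) with inverse φ^{-1}(t) = (αt+β)/(γt+δ), and set f̂(t) = (γt+δ)^n f(φ^{-1}(t)) and ĝ(t) = (γt+δ)^n g(φ^{-1}(t)). If f̂ and ĝ both have degree n, then f̂ and ĝ are apolar if and only if f and g are apolar. -/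
open Polynomial

/-- The apolarity form of two complex polynomials regarded as having degree `n`:
`Σ_{k=0}^n C(n,k) (-1)^{n-k} a_k b_{n-k}` where `a_k = f.coeff k / C(n,k)` and
`b_k = g.coeff k / C(n,k)`. -/
noncomputable def apolarSum (n : ℕ) (f g : Polynomial ℂ) : ℂ :=
  ∑ k ∈ Finset.range (n + 1),
    (-1) ^ (n - k) * f.coeff k * g.coeff (n - k) / (n.choose k : ℂ)

/-- Two complex polynomials of degree `n` are apolar if `a_n b_n ≠ 0` and the
apolarity form vanishes. -/
noncomputable def Apolar (n : ℕ) (f g : Polynomial ℂ) : Prop :=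
  f.coeff n * g.coeff n ≠ 0 ∧ apolarSum n f g = 0

open Finset

namespace ApolarAux

noncomputable def Tr (b : ℂ) (f : ℂ[X]) : ℂ[X] := f.comp (X + C b)
noncomputable def Dil (c : ℂ) (f : ℂ[X]) : ℂ[X] := f.comp (C c * X)
noncomputable def Rev (n : ℕ) (f : ℂ[X]) : ℂ[X] :=
  ∑ k ∈ Finset.range (n + 1), C (f.coeff (n - k)) * X ^ k

lemma Tr_eval (b : ℂ) (f : ℂ[X]) (t : ℂ) : (Tr b f).eval t = f.eval (t + b) := by
  simp [Tr, eval_comp]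

lemma Dil_eval (c : ℂ) (f : ℂ[X]) (t : ℂ) : (Dil c f).eval t = f.eval (c * t) := by
  simp [Dil, eval_comp]

lemma Tr_natDegree (b : ℂ) (f : ℂ[X]) : (Tr b f).natDegree = f.natDegree := by
  rw [Tr, ← taylor_apply, natDegree_taylor]

lemma Dil_coeff (c : ℂ) (f : ℂ[X]) (k : ℕ) : (Dil c f).coeff k = c ^ k * f.coeff k := by
  induction f using Polynomial.induction_on' with
  | add p q hp hq =>
      simp only [Dil, add_comp, coeff_add] at *
      rw [hp, hq]; ring
  | monomial m a =>
      simp only [Dil, monomial_comp, mul_pow, ← C_pow, coeff_monomial]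
      rw [← mul_assoc, ← C_mul, coeff_C_mul, coeff_X_pow]
      by_cases h : m = k
      · subst h; simp [mul_comm]
      · simp [h, Ne.symm h]

lemma Dil_natDegree_le (c : ℂ) (f : ℂ[X]) : (Dil c f).natDegree ≤ f.natDegree := by
  apply natDegree_le_iff_coeff_eq_zero.mpr
  intro N hN
  rw [Dil_coeff, coeff_eq_zero_of_natDegree_lt hN, mul_zero]

lemma Rev_coeff (n : ℕ) (f : ℂ[X]) {k : ℕ} (hk : k ≤ n) :
    (Rev n f).coeff k = f.coeff (n - k) := by
  rw [Rev, finset_sum_coeff]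
  rw [Finset.sum_eq_single k]
  · simp
  · intro j hj hjk
    rw [coeff_C_mul, coeff_X_pow, if_neg (Ne.symm hjk), mul_zero]
  · intro h
    exact absurd (Finset.mem_range.mpr (Nat.lt_succ_of_le hk)) h

lemma Rev_natDegree_le (n : ℕ) (f : ℂ[X]) : (Rev n f).natDegree ≤ n := by
  apply natDegree_le_iff_coeff_eq_zero.mpr
  intro N hN
  rw [Rev, finset_sum_coeff]
  apply Finset.sum_eq_zero
  intro j hj
  rw [coeff_C_mul, coeff_X_pow, if_neg, mul_zero]
  exact fun h => absurd (Finset.mem_range.mp hj) (by omega)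

lemma Rev_eval {n : ℕ} {f : ℂ[X]} (hf : f.natDegree ≤ n) {t : ℂ} (ht : t ≠ 0) :
    (Rev n f).eval t = t ^ n * f.eval t⁻¹ := by
  rw [Rev, eval_finset_sum, eval_eq_sum_range' (Nat.lt_succ_of_le hf), Finset.mul_sum]
  rw [← Finset.sum_range_reflect]
  apply Finset.sum_congr rfl
  intro k hk
  have hk' : k ≤ n := Nat.lt_succ_iff.mp (Finset.mem_range.mp hk)
  simp only [eval_mul, eval_C, eval_pow, eval_X, Nat.add_sub_cancel]
  have h2 : n - (n - k) = k := by omega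
  rw [h2]
  have h3 : t ^ n * t⁻¹ ^ k = t ^ (n - k) := by
    rw [inv_pow, mul_inv_eq_iff_eq_mul₀ (pow_ne_zero _ ht), ← pow_add]
    congr 1; omega
  rw [mul_comm (f.coeff k) (t⁻¹ ^ k), ← mul_assoc, h3, mul_comm]

end ApolarAux

namespace ApolarAux

noncomputable def Wp (n : ℕ) (f g : ℂ[X]) : ℂ[X] :=
  ∑ k ∈ Finset.range (n + 1),
    C ((-1 : ℂ) ^ (n - k)) * (derivative^[k] f * derivative^[n - k] g)

lemma Wp_derivative {n : ℕ} {f g : ℂ[X]} (hf : f.natDegree ≤ n) (hg : g.natDegree ≤ n) :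
    derivative (Wp n f g) = 0 := by
  have hf1 : derivative^[n + 1] f = 0 := iterate_derivative_eq_zero (Nat.lt_succ_of_le hf)
  have hg1 : derivative^[n + 1] g = 0 := iterate_derivative_eq_zero (Nat.lt_succ_of_le hg)
  rw [Wp, derivative_sum]
  have step : ∀ k ∈ Finset.range (n + 1),
      derivative (C ((-1 : ℂ) ^ (n - k)) * (derivative^[k] f * derivative^[n - k] g))
      = C ((-1 : ℂ) ^ (n - k)) * (derivative^[k + 1] f * derivative^[n - k] g)
        + C ((-1 : ℂ) ^ (n - k)) * (derivative^[k] f * derivative^[(n - k) + 1] g) := by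
    intro k _
    rw [derivative_C_mul, derivative_mul, Function.iterate_succ_apply',
      Function.iterate_succ_apply', mul_add]
  rw [Finset.sum_congr rfl step, Finset.sum_add_distrib]
  have S1 : ∑ k ∈ Finset.range (n + 1),
      C ((-1 : ℂ) ^ (n - k)) * (derivative^[k + 1] f * derivative^[n - k] g)
      = ∑ k ∈ Finset.range n,
        C ((-1 : ℂ) ^ (n - k)) * (derivative^[k + 1] f * derivative^[n - k] g) := by
    rw [Finset.sum_range_succ, hf1]
    simp
  have S2 : ∑ k ∈ Finset.range (n + 1),
      C ((-1 : ℂ) ^ (n - k)) * (derivative^[k] f * derivative^[(n - k) + 1] g)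
      = ∑ k ∈ Finset.range n,
        C ((-1 : ℂ) ^ (n - (k + 1))) * (derivative^[k + 1] f * derivative^[(n - (k + 1)) + 1] g) := by
    rw [Finset.sum_range_succ']
    have h0 : C ((-1 : ℂ) ^ (n - 0)) * (derivative^[0] f * derivative^[(n - 0) + 1] g) = 0 := by
      simp [hg1]
    rw [h0, add_zero]
  rw [S1, S2, ← Finset.sum_add_distrib]
  apply Finset.sum_eq_zero
  intro k hk
  have hk' : k < n := Finset.mem_range.mp hk
  have e1 : n - (k + 1) + 1 = n - k := by omega
  have e2 : ((-1 : ℂ)) ^ (n - k) = -(-1 : ℂ) ^ (n - (k + 1)) := by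
    rw [show n - k = (n - (k + 1)) + 1 by omega, pow_succ]; ring
  rw [e1, e2, map_neg]; ring

lemma iterate_derivative_eval_zero (p : ℂ[X]) (k : ℕ) :
    (derivative^[k] p).eval 0 = (k.factorial : ℂ) * p.coeff k := by
  rw [← coeff_zero_eq_eval_zero, Polynomial.coeff_iterate_derivative]
  simp [Nat.descFactorial_self, nsmul_eq_mul]

lemma Wp_eval_zero (n : ℕ) (f g : ℂ[X]) :
    (Wp n f g).eval 0 = (n.factorial : ℂ) * apolarSum n f g := by
  rw [Wp, eval_finset_sum, apolarSum, Finset.mul_sum]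
  apply Finset.sum_congr rfl
  intro k hk
  have hkn : k ≤ n := Nat.lt_succ_iff.mp (Finset.mem_range.mp hk)
  rw [eval_mul, eval_C, eval_mul, iterate_derivative_eval_zero, iterate_derivative_eval_zero]
  have hC : (n.choose k : ℂ) ≠ 0 := Nat.cast_ne_zero.mpr (Nat.choose_pos hkn).ne'
  have hfactC : (n.choose k : ℂ) * (k.factorial : ℂ) * ((n - k).factorial : ℂ)
      = (n.factorial : ℂ) := by
    exact_mod_cast congrArg (Nat.cast (R := ℂ)) (Nat.choose_mul_factorial_mul_factorial hkn)
  field_simp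
  linear_combination (f.coeff k * g.coeff (n - k)) * hfactC

lemma Tr_iterate_derivative (b : ℂ) (f : ℂ[X]) (k : ℕ) :
    derivative^[k] (Tr b f) = Tr b (derivative^[k] f) := by
  induction k with
  | zero => rfl
  | succ k ih =>
      rw [Function.iterate_succ_apply', ih, Function.iterate_succ_apply', Tr, Tr,
        derivative_comp]
      simp

lemma Wp_Tr (n : ℕ) (b : ℂ) (f g : ℂ[X]) : Wp n (Tr b f) (Tr b g) = Tr b (Wp n f g) := by
  simp only [Wp, Tr, Polynomial.sum_comp, mul_comp, C_comp]
  apply Finset.sum_congr rfl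
  intro k _
  rw [← Tr, ← Tr, ← Tr, ← Tr, Tr_iterate_derivative, Tr_iterate_derivative]

lemma apolarSum_Tr {n : ℕ} {f g : ℂ[X]} (hf : f.natDegree ≤ n) (hg : g.natDegree ≤ n)
    (b : ℂ) : apolarSum n (Tr b f) (Tr b g) = apolarSum n f g := by
  have hfac : (n.factorial : ℂ) ≠ 0 := by exact_mod_cast n.factorial_ne_zero
  apply mul_left_cancel₀ hfac
  rw [← Wp_eval_zero, ← Wp_eval_zero, Wp_Tr, Tr_eval]
  have h0 : Wp n f g = C ((Wp n f g).coeff 0) :=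
    eq_C_of_natDegree_eq_zero (natDegree_eq_zero_of_derivative_eq_zero (Wp_derivative hf hg))
  rw [h0]; simp

lemma apolarSum_Dil (n : ℕ) (c : ℂ) (f g : ℂ[X]) :
    apolarSum n (Dil c f) (Dil c g) = c ^ n * apolarSum n f g := by
  rw [apolarSum, apolarSum, Finset.mul_sum]
  apply Finset.sum_congr rfl
  intro k hk
  have hkn : k ≤ n := Nat.lt_succ_iff.mp (Finset.mem_range.mp hk)
  rw [Dil_coeff, Dil_coeff]
  have : c ^ k * c ^ (n - k) = c ^ n := by rw [← pow_add]; congr 1; omega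
  rw [mul_div_assoc, mul_div_assoc, ← this]; ring

lemma apolarSum_Rev (n : ℕ) (f g : ℂ[X]) :
    apolarSum n (Rev n f) (Rev n g) = (-1) ^ n * apolarSum n f g := by
  rw [apolarSum, apolarSum, Finset.mul_sum]
  conv_rhs => rw [← Finset.sum_range_reflect]
  apply Finset.sum_congr rfl
  intro k hk
  have hkn : k ≤ n := Nat.lt_succ_iff.mp (Finset.mem_range.mp hk)
  rw [Rev_coeff n f hkn, Rev_coeff n g (Nat.sub_le n k)]
  rw [show n + 1 - 1 - k = n - k by omega]
  have h1 : n - (n - k) = k := by omega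
  rw [h1, Nat.choose_symm hkn]
  have hs : (-1 : ℂ) ^ n * (-1 : ℂ) ^ k = (-1 : ℂ) ^ (n - k) := by
    rw [← pow_add, show n + k = (n - k) + 2 * k by omega, pow_add, pow_mul, neg_one_sq,
      one_pow, mul_one]
  rw [← hs]; ring

lemma apolarSum_C_mul_left (n : ℕ) (s : ℂ) (f g : ℂ[X]) :
    apolarSum n (C s * f) g = s * apolarSum n f g := by
  rw [apolarSum, apolarSum, Finset.mul_sum]
  apply Finset.sum_congr rfl
  intro k _
  rw [coeff_C_mul, mul_div_assoc, mul_div_assoc]; ring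

lemma apolarSum_C_mul_right (n : ℕ) (s : ℂ) (f g : ℂ[X]) :
    apolarSum n f (C s * g) = s * apolarSum n f g := by
  rw [apolarSum, apolarSum, Finset.mul_sum]
  apply Finset.sum_congr rfl
  intro k _
  rw [coeff_C_mul, mul_div_assoc, mul_div_assoc]; ring

end ApolarAux

namespace ApolarAux

lemma Tr_eq_zero_iff (b : ℂ) (f : ℂ[X]) : Tr b f = 0 ↔ f = 0 := by
  constructor
  · intro h
    rcases comp_eq_zero_iff.mp h with h' | ⟨-, h'⟩
    · exact h'
    · exfalso
      have := congrArg natDegree h'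
      rw [natDegree_X_add_C, natDegree_C] at this
      exact one_ne_zero this
  · intro h; simp [Tr, h]

lemma Dil_eq_zero_iff {c : ℂ} (hc : c ≠ 0) (f : ℂ[X]) : Dil c f = 0 ↔ f = 0 := by
  constructor
  · intro h
    rcases comp_eq_zero_iff.mp h with h' | ⟨-, h'⟩
    · exact h'
    · exfalso
      have := congrArg natDegree h'
      rw [natDegree_C_mul_X c hc, natDegree_C] at this
      exact one_ne_zero this
  · intro h; simp [Dil, h]

lemma Rev_eq_zero_iff {n : ℕ} {f : ℂ[X]} (hf : f.natDegree ≤ n) : Rev n f = 0 ↔ f = 0 := by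
  constructor
  · intro h
    ext j
    by_cases hj : j ≤ n
    · have := congrArg (fun p => Polynomial.coeff p (n - j)) h
      simp only [coeff_zero] at this
      rw [Rev_coeff n f (Nat.sub_le n j), show n - (n - j) = j by omega] at this
      simpa using this
    · exact coeff_eq_zero_of_natDegree_lt (lt_of_le_of_lt hf (not_le.mp hj))
  · intro h; simp [Rev, h]

/-- Representation of `fh` when `γ ≠ 0`. -/
lemma rep1 {n : ℕ} {f fh : ℂ[X]} {α β γ δ : ℂ} (hγ : γ ≠ 0)
    (hfn : f.natDegree ≤ n)
    (hfh : ∀ t : ℂ, γ * t + δ ≠ 0 →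
      fh.eval t = (γ * t + δ) ^ n * f.eval ((α * t + β) / (γ * t + δ))) :
    fh = Tr (δ / γ) (Dil γ (Rev n (Dil (-(α * δ - β * γ) / γ) (Tr (α / γ) f)))) := by
  apply eq_of_infinite_eval_eq
  apply Set.Infinite.mono (s := ({-(δ / γ)}ᶜ : Set ℂ))
  · intro t ht
    have hne : γ * t + δ ≠ 0 := by
      intro h0
      apply ht
      show t = -(δ / γ)
      field_simp
      linear_combination h0
    show fh.eval t = _
    rw [hfh t hne, Tr_eval, Dil_eval]
    have harg : γ * (t + δ / γ) = γ * t + δ := by field_simp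
    rw [harg]
    have hdeg : (Dil (-(α * δ - β * γ) / γ) (Tr (α / γ) f)).natDegree ≤ n := by
      refine le_trans (Dil_natDegree_le _ _) ?_
      rw [Tr_natDegree]; exact hfn
    rw [Rev_eval hdeg hne, Dil_eval, Tr_eval]
    congr 2
    field_simp
    linear_combination α * mul_inv_cancel₀ (show t * γ + δ ≠ 0 by rw [mul_comm]; exact hne)
  · exact Set.Finite.infinite_compl (Set.finite_singleton _)

/-- Representation of `fh` when `γ = 0`. -/
lemma rep0 {n : ℕ} {f fh : ℂ[X]} {α β γ δ : ℂ} (hγ : γ = 0) (hα : α ≠ 0) (hδ : δ ≠ 0)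
    (hfn : f.natDegree ≤ n)
    (hfh : ∀ t : ℂ, γ * t + δ ≠ 0 →
      fh.eval t = (γ * t + δ) ^ n * f.eval ((α * t + β) / (γ * t + δ))) :
    fh = C (δ ^ n) * Tr (β / α) (Dil (α / δ) f) := by
  apply Polynomial.funext
  intro t
  have hne : γ * t + δ ≠ 0 := by rw [hγ]; simpa using hδ
  rw [hfh t hne, hγ, eval_mul, eval_C, Tr_eval, Dil_eval]
  congr 2
  · simp
  · field_simp; linear_combination (α * t + β) * mul_inv_cancel₀ hδ

end ApolarAux


open ApolarAux in
/-- Apolarity is invariant under Möbius transformations:  if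
`φ(t) = (at+b)/(ct+d)` (with `ad - bc ≠ 0`) has inverse
`φ⁻¹(t) = (αt+β)/(γt+δ)`, and `f̂(t) = (γt+δ)^n f(φ⁻¹(t))`,
`ĝ(t) = (γt+δ)^n g(φ⁻¹(t))` have degree `n`, then `f̂` and `ĝ` are apolar iff
`f` and `g` are. -/
theorem apolar_mobius_invariant (n : ℕ) (f g fh gh : Polynomial ℂ)
    (a b c d α β γ δ : ℂ) (hmob : a * d - b * c ≠ 0)
    (hinv : ∃ lam : ℂ, lam ≠ 0 ∧
      α = lam * d ∧ β = -(lam * b) ∧ γ = -(lam * c) ∧ δ = lam * a)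
    (hfn : f.natDegree = n) (hgn : g.natDegree = n)
    (hfhn : fh.natDegree = n) (hghn : gh.natDegree = n)
    (hfh : ∀ t : ℂ, γ * t + δ ≠ 0 →
      fh.eval t = (γ * t + δ) ^ n * f.eval ((α * t + β) / (γ * t + δ)))
    (hgh : ∀ t : ℂ, γ * t + δ ≠ 0 →
      gh.eval t = (γ * t + δ) ^ n * g.eval ((α * t + β) / (γ * t + δ))) :
    Apolar n fh gh ↔ Apolar n f g := by
  obtain ⟨lam, hlam, hα, hβ, hγ, hδ⟩ := hinv
  have hΔ : α * δ - β * γ ≠ 0 := by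
    rw [hα, hβ, hγ, hδ,
      show lam * d * (lam * a) - -(lam * b) * -(lam * c) = lam ^ 2 * (a * d - b * c) by ring]
    exact mul_ne_zero (pow_ne_zero 2 hlam) hmob
  have hfn' : f.natDegree ≤ n := le_of_eq hfn
  have hgn' : g.natDegree ≤ n := le_of_eq hgn
  have key : apolarSum n fh gh = (α * δ - β * γ) ^ n * apolarSum n f g ∧
      (fh = 0 ↔ f = 0) ∧ (gh = 0 ↔ g = 0) := by
    by_cases hγ0 : γ = 0
    · have hc0 : c = 0 := by
        have : -(lam * c) = 0 := hγ0 ▸ hγ.symm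
        rcases mul_eq_zero.mp (neg_eq_zero.mp this) with h | h
        · exact absurd h hlam
        · exact h
      have had : a * d ≠ 0 := by
        intro h; apply hmob; rw [hc0]; rw [mul_eq_zero] at h
        rcases h with h | h <;> simp [h] <;> ring
      have hδ0 : δ ≠ 0 := by
        rw [hδ]; exact mul_ne_zero hlam fun h => had (by rw [h, zero_mul])
      have hα0 : α ≠ 0 := by
        rw [hα]; exact mul_ne_zero hlam fun h => had (by rw [h, mul_zero])
      have hrf := rep0 hγ0 hα0 hδ0 hfn' hfh
      have hrg := rep0 hγ0 hα0 hδ0 hgn' hgh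
      have hdegf : (Dil (α / δ) f).natDegree ≤ n := le_trans (Dil_natDegree_le _ _) hfn'
      have hdegg : (Dil (α / δ) g).natDegree ≤ n := le_trans (Dil_natDegree_le _ _) hgn'
      refine ⟨?_, ?_, ?_⟩
      · rw [hrf, hrg, apolarSum_C_mul_left, apolarSum_C_mul_right,
          apolarSum_Tr hdegf hdegg, apolarSum_Dil]
        have hmulpow : δ ^ n * δ ^ n * (α / δ) ^ n = (α * δ - β * γ) ^ n := by
          rw [hγ0, div_pow]
          field_simp
          ring
        linear_combination apolarSum n f g * hmulpow
      · rw [hrf, mul_eq_zero, Tr_eq_zero_iff, Dil_eq_zero_iff (div_ne_zero hα0 hδ0)]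
        simp only [C_eq_zero, pow_eq_zero_iff']
        constructor
        · rintro (⟨h, -⟩ | h)
          · exact absurd h hδ0
          · exact h
        · exact fun h => Or.inr h
      · rw [hrg, mul_eq_zero, Tr_eq_zero_iff, Dil_eq_zero_iff (div_ne_zero hα0 hδ0)]
        simp only [C_eq_zero, pow_eq_zero_iff']
        constructor
        · rintro (⟨h, -⟩ | h)
          · exact absurd h hδ0
          · exact h
        · exact fun h => Or.inr h
    · have hrf := rep1 hγ0 hfn' hfh
      have hrg := rep1 hγ0 hgn' hgh
      have hc'0 : -(α * δ - β * γ) / γ ≠ 0 := div_ne_zero (neg_ne_zero.mpr hΔ) hγ0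
      have hdegf2 : (Dil (-(α * δ - β * γ) / γ) (Tr (α / γ) f)).natDegree ≤ n := by
        refine le_trans (Dil_natDegree_le _ _) ?_
        rw [Tr_natDegree]; exact hfn'
      have hdegg2 : (Dil (-(α * δ - β * γ) / γ) (Tr (α / γ) g)).natDegree ≤ n := by
        refine le_trans (Dil_natDegree_le _ _) ?_
        rw [Tr_natDegree]; exact hgn'
      have hdegf1 : (Dil γ (Rev n (Dil (-(α * δ - β * γ) / γ) (Tr (α / γ) f)))).natDegree ≤ n :=
        le_trans (Dil_natDegree_le _ _) (Rev_natDegree_le _ _)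
      have hdegg1 : (Dil γ (Rev n (Dil (-(α * δ - β * γ) / γ) (Tr (α / γ) g)))).natDegree ≤ n :=
        le_trans (Dil_natDegree_le _ _) (Rev_natDegree_le _ _)
      refine ⟨?_, ?_, ?_⟩
      · rw [hrf, hrg, apolarSum_Tr hdegf1 hdegg1, apolarSum_Dil, apolarSum_Rev,
          apolarSum_Dil, apolarSum_Tr hfn' hgn']
        have hmul : γ ^ n * ((-1 : ℂ) ^ n * ((-(α * δ - β * γ)) / γ) ^ n)
            = (α * δ - β * γ) ^ n := by
          rw [div_pow]
          field_simp
          rw [← mul_pow]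
          congr 1
          ring
        linear_combination apolarSum n f g * hmul
      · rw [hrf, Tr_eq_zero_iff, Dil_eq_zero_iff hγ0, Rev_eq_zero_iff hdegf2,
          Dil_eq_zero_iff hc'0, Tr_eq_zero_iff]
      · rw [hrg, Tr_eq_zero_iff, Dil_eq_zero_iff hγ0, Rev_eq_zero_iff hdegg2,
          Dil_eq_zero_iff hc'0, Tr_eq_zero_iff]
  obtain ⟨hsum, hf0, hg0⟩ := key
  have hΔn : (α * δ - β * γ) ^ n ≠ 0 := pow_ne_zero _ hΔ
  have lead : ∀ p : Polynomial ℂ, p.natDegree = n → (p.coeff n = 0 ↔ p = 0) := by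
    intro p hp
    rw [← hp, ← Polynomial.leadingCoeff, Polynomial.leadingCoeff_eq_zero]
  constructor
  · rintro ⟨h1, h2⟩
    have ha1 : fh.coeff n ≠ 0 := left_ne_zero_of_mul h1
    have hb1 : gh.coeff n ≠ 0 := right_ne_zero_of_mul h1
    refine ⟨mul_ne_zero (fun h => ha1 ((lead fh hfhn).mpr (hf0.mpr ((lead f hfn).mp h))))
        (fun h => hb1 ((lead gh hghn).mpr (hg0.mpr ((lead g hgn).mp h)))), ?_⟩
    rw [hsum] at h2
    exact (mul_eq_zero.mp h2).resolve_left hΔn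
  · rintro ⟨h1, h2⟩
    have ha1 : f.coeff n ≠ 0 := left_ne_zero_of_mul h1
    have hb1 : g.coeff n ≠ 0 := right_ne_zero_of_mul h1
    refine ⟨mul_ne_zero (fun h => ha1 ((lead f hfn).mpr (hf0.mp ((lead fh hfhn).mp h))))
        (fun h => hb1 ((lead g hgn).mpr (hg0.mp ((lead gh hghn).mp h)))), ?_⟩
    rw [hsum, h2, mul_zero]
end

section
/- Grace's Apolarity Theorem: Let f(t) and g(t) be apolar complex polynomials of degree n, and let 𝒜 be a circular region. If every root of g lies in 𝒜, then f has at least one root in 𝒜. -/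
open Polynomial

/-- A circular region: an open or closed subset of `ℂ` bounded by a circle or a
straight line, i.e. an open/closed disk, the open/closed exterior of a disk, or
an open/closed half-plane. -/
def CircularRegion (A : Set ℂ) : Prop :=
  (∃ p : ℂ, ∃ r : ℝ, 0 < r ∧ A = {z : ℂ | ‖z - p‖ < r}) ∨
  (∃ p : ℂ, ∃ r : ℝ, 0 < r ∧ A = {z : ℂ | ‖z - p‖ ≤ r}) ∨
  (∃ p : ℂ, ∃ r : ℝ, 0 < r ∧ A = {z : ℂ | r < ‖z - p‖}) ∨
  (∃ p : ℂ, ∃ r : ℝ, 0 < r ∧ A = {z : ℂ | r ≤ ‖z - p‖}) ∨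
  (∃ u v : ℂ, u ≠ 0 ∧ A = {z : ℂ | 0 < (u * z + v).im}) ∨
  (∃ u v : ℂ, u ≠ 0 ∧ A = {z : ℂ | 0 ≤ (u * z + v).im})



noncomputable def Qf (α : ℝ) (γ : ℂ) (δ : ℝ) (z : ℂ) : ℝ :=
  α * (z.re^2 + z.im^2) + γ.re * z.re - γ.im * z.im + δ

noncomputable def Phi (f : Polynomial ℂ) (s : Multiset ℂ) : ℂ :=
  ∑ k ∈ Finset.range (Multiset.card s + 1),
    f.coeff k * s.esymm k / ((Multiset.card s).choose k : ℂ)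

lemma esymm_cons (a : ℂ) (s : Multiset ℂ) (k : ℕ) :
    (a ::ₘ s).esymm (k+1) = s.esymm (k+1) + a * s.esymm k := by
  simp only [Multiset.esymm, Multiset.powersetCard_cons, Multiset.map_add, Multiset.sum_add,
    Multiset.map_map]
  congr 1
  rw [← Multiset.sum_map_mul_left]
  congr 1
  apply Multiset.map_congr rfl
  intro x _
  simp [Multiset.prod_cons]

lemma esymm_zero' (s : Multiset ℂ) : s.esymm 0 = 1 := by
  simp [Multiset.esymm]

lemma esymm_eq_zero (s : Multiset ℂ) (k : ℕ) (h : Multiset.card s < k) : s.esymm k = 0 := by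
  simp [Multiset.esymm, Multiset.powersetCard_eq_empty _ h]

lemma esymm_one' (s : Multiset ℂ) : s.esymm 1 = s.sum := by
  simp [Multiset.esymm, Multiset.powersetCard_one, Multiset.map_map, Function.comp_def]

-- inversion identity
lemma Qf_inv (α δ : ℝ) (γ w y : ℂ) (hy : y ≠ 0) :
    Qf (Qf α γ δ w) (-2*(α:ℂ)*w - (starRingEnd ℂ) γ) α y
      = Qf α γ δ (w - 1/y) * (y.re^2 + y.im^2) := by
  have hN : y.re^2 + y.im^2 ≠ 0 := by
    have := Complex.normSq_pos.mpr hy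
    rw [Complex.normSq_apply] at this
    nlinarith
  have h1 : (1/y).re = y.re / (y.re^2+y.im^2) := by
    rw [one_div, Complex.inv_re, Complex.normSq_apply]; ring
  have h2 : (1/y).im = -y.im / (y.re^2+y.im^2) := by
    rw [one_div, Complex.inv_im, Complex.normSq_apply]; ring
  simp only [Qf, Complex.sub_re, Complex.sub_im, Complex.mul_re, Complex.mul_im,
    Complex.ofReal_re, Complex.ofReal_im, Complex.conj_re, Complex.conj_im, h1, h2,
    Complex.neg_re, Complex.neg_im, Complex.re_ofNat, Complex.im_ofNat]
  field_simp
  ring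

lemma Qf_convex (P : ℝ → Prop)
    (Pmono : ∀ {x y : ℝ}, x ≤ y → P y → P x)
    {α : ℝ} {γ : ℂ} {δ : ℝ} (hα : 0 ≤ α) {a b : ℝ} {z₁ z₂ : ℂ}
    (ha : 0 ≤ a) (hb : 0 ≤ b) (hab : a + b = 1)
    (h₁ : P (Qf α γ δ z₁)) (h₂ : P (Qf α γ δ z₂)) :
    P (Qf α γ δ ((a:ℂ)*z₁ + (b:ℂ)*z₂)) := by
  obtain rfl : b = 1 - a := by linarith
  have key : Qf α γ δ ((a:ℂ)*z₁ + ((1-a:ℝ):ℂ)*z₂) ≤ a * Qf α γ δ z₁ + (1-a) * Qf α γ δ z₂ := by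
    simp only [Qf, Complex.add_re, Complex.add_im, Complex.mul_re, Complex.mul_im,
      Complex.ofReal_re, Complex.ofReal_im]
    nlinarith [mul_nonneg (mul_nonneg (mul_nonneg hα ha) hb) (sq_nonneg (z₁.re - z₂.re)),
      mul_nonneg (mul_nonneg (mul_nonneg hα ha) hb) (sq_nonneg (z₁.im - z₂.im))]
  rcases le_total (Qf α γ δ z₁) (Qf α γ δ z₂) with h | h
  · exact Pmono (key.trans (by nlinarith)) h₂
  · exact Pmono (key.trans (by nlinarith)) h₁

lemma Qf_avg (P : ℝ → Prop)
    (Pmono : ∀ {x y : ℝ}, x ≤ y → P y → P x)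
    {α : ℝ} {γ : ℂ} {δ : ℝ} (hα : 0 ≤ α) (t : Multiset ℂ) (ht0 : t ≠ 0)
    (hmem : ∀ z ∈ t, P (Qf α γ δ z)) :
    P (Qf α γ δ (t.sum / (Multiset.card t : ℂ))) := by
  induction t using Multiset.induction_on with
  | empty => simp at ht0
  | cons a t ih =>
    rcases eq_or_ne t 0 with rfl | ht
    · simpa using hmem a (by simp)
    · have hm : (0:ℕ) < Multiset.card t := Multiset.card_pos.mpr ht
      have hmC : ((Multiset.card t : ℕ):ℝ) ≠ 0 := by positivity
      have hEq : (a ::ₘ t).sum / ((Multiset.card (a ::ₘ t) : ℕ):ℂ)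
          = ((1/((Multiset.card t : ℕ)+1) : ℝ):ℂ) * a
            + ((((Multiset.card t : ℕ):ℝ)/((Multiset.card t : ℕ)+1) : ℝ):ℂ)
              * (t.sum / ((Multiset.card t : ℕ):ℂ)) := by
        rw [Multiset.sum_cons, Multiset.card_cons]
        have hmC' : ((Multiset.card t : ℕ):ℂ) ≠ 0 := by exact_mod_cast hmC
        have hm1C : ((Multiset.card t : ℕ):ℂ) + 1 ≠ 0 := Nat.cast_add_one_ne_zero _
        push_cast
        field_simp
      rw [hEq]
      refine Qf_convex P Pmono hα (by positivity) (by positivity) (by field_simp; ring) ?_ ?_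
      · exact hmem a (by simp)
      · exact ih ht (fun z hz => hmem z (by simp [hz]))

lemma deriv_eval (w : ℂ) (s : Multiset ℂ) (h : ∀ a ∈ s, w ≠ a) :
    eval w (derivative ((s.map (fun a => X - C a)).prod))
      = eval w ((s.map (fun a => X - C a)).prod) * (s.map (fun a => (w - a)⁻¹)).sum := by
  induction s using Multiset.induction_on with
  | empty => simp
  | cons a s ih =>
    have ha : w - a ≠ 0 := sub_ne_zero.mpr (h a (by simp))
    have ih' := ih (fun b hb => h b (by simp [hb]))
    simp only [Multiset.map_cons, Multiset.prod_cons, derivative_mul, derivative_sub,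
      derivative_X, derivative_C, sub_zero, one_mul, eval_add, eval_mul, eval_sub, eval_X,
      eval_C, Multiset.sum_cons, ih']
    field_simp
lemma g1_coeff (f : Polynomial ℂ) (β : ℂ) (n k : ℕ) :
    (C ((n:ℕ):ℂ) * f + (C β - X) * derivative f).coeff k
      = ((n:ℂ) - k) * f.coeff k + β*((k:ℂ)+1)*f.coeff (k+1) := by
  rw [coeff_add, coeff_C_mul, sub_mul, coeff_sub, coeff_C_mul, coeff_derivative]
  cases k with
  | zero => simp [mul_coeff_zero]
  | succ k =>
    rw [coeff_X_mul, coeff_derivative]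
    push_cast
    ring

lemma Phi_polar (f : Polynomial ℂ) (β : ℂ) (s : Multiset ℂ) :
    Phi (C (((Multiset.card s + 1 : ℕ)):ℂ) * f + (C β - X) * derivative f) s
      = ((Multiset.card s + 1 : ℕ):ℂ) * Phi f (β ::ₘ s) := by
  set m := Multiset.card s with hm
  set F : ℕ → ℂ := fun k => f.coeff k with hF
  set e : ℕ → ℂ := fun k => s.esymm k with he
  set A : ℕ → ℂ := fun k => ((m+1:ℕ):ℂ) * F k * e k / ((m+1).choose k : ℂ) with hA
  set B : ℕ → ℂ := fun k => ((m+1:ℕ):ℂ) * β * F (k+1) * e k / ((m+1).choose (k+1) : ℂ) with hB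
  have hL : Phi (C (((m + 1 : ℕ)):ℂ) * f + (C β - X) * derivative f) s
      = (∑ k ∈ Finset.range (m+1), A k) + (∑ k ∈ Finset.range (m+1), B k) := by
    rw [← Finset.sum_add_distrib]
    unfold Phi
    rw [← hm]
    apply Finset.sum_congr rfl
    intro k hk
    have hk' : k ≤ m := Nat.lt_succ_iff.mp (Finset.mem_range.mp hk)
    have c1 : ((m.choose k : ℕ):ℂ) ≠ 0 :=
      Nat.cast_ne_zero.mpr (Nat.choose_pos hk').ne'
    have c2 : (((m+1).choose k : ℕ):ℂ) ≠ 0 :=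
      Nat.cast_ne_zero.mpr (Nat.choose_pos (hk'.trans (Nat.le_succ m))).ne'
    have c3 : (((m+1).choose (k+1) : ℕ):ℂ) ≠ 0 :=
      Nat.cast_ne_zero.mpr (Nat.choose_pos (Nat.succ_le_succ hk')).ne'
    have idA : (((m:ℂ)+1) - k) * ((m+1).choose k : ℂ) = ((m:ℂ)+1) * (m.choose k : ℂ) := by
      have h := Nat.choose_mul_succ_eq m k
      have hcast : ((m + 1 - k : ℕ):ℂ) = ((m:ℂ)+1) - k := by
        push_cast [Nat.cast_sub (hk'.trans (Nat.le_succ m))]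
        ring
      calc (((m:ℂ)+1) - k) * ((m+1).choose k : ℂ)
          = ((m + 1 - k : ℕ):ℂ) * (((m+1).choose k : ℕ):ℂ) := by rw [hcast]
        _ = (((m+1).choose k * (m + 1 - k) : ℕ):ℂ) := by push_cast; ring
        _ = ((m.choose k * (m+1) : ℕ):ℂ) := by rw [← h]
        _ = ((m:ℂ)+1) * (m.choose k : ℂ) := by push_cast; ring
    have idB : ((k:ℂ)+1) * (((m+1).choose (k+1)) : ℂ) = ((m:ℂ)+1) * (m.choose k : ℂ) := by
      have h := Nat.add_one_mul_choose_eq m k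
      calc ((k:ℂ)+1) * (((m+1).choose (k+1)) : ℂ)
          = (((m+1).choose (k+1) * (k+1) : ℕ):ℂ) := by push_cast; ring
        _ = ((Nat.succ m * m.choose k : ℕ):ℂ) := by rw [← h]
        _ = ((m:ℂ)+1) * (m.choose k : ℂ) := by push_cast; ring
    have hM : ((m+1:ℕ):ℂ) = (m:ℂ)+1 := by push_cast; ring
    rw [g1_coeff, hA, hB, hM]
    rw [div_add_div _ _ c2 c3, div_eq_div_iff c1 (mul_ne_zero c2 c3)]
    linear_combination (e k * (((m+1).choose (k+1) : ℕ):ℂ) * F k) * idA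
      + (β * F (k+1) * e k * (((m+1).choose k : ℕ):ℂ)) * idB
  have hAtop : A (m+1) = 0 := by
    have : e (m+1) = 0 := esymm_eq_zero s (m+1) (by omega)
    simp [hA, this]
  have hAext : (∑ k ∈ Finset.range (m+1), A k) = ∑ k ∈ Finset.range ((m+1)+1), A k := by
    have h := Finset.sum_range_succ A (m+1)
    rw [hAtop, add_zero] at h
    exact h.symm
  have hR : ((m + 1 : ℕ):ℂ) * Phi f (β ::ₘ s)
      = (∑ k ∈ Finset.range ((m+1)+1), A k) + (∑ k ∈ Finset.range (m+1), B k) := by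
    unfold Phi
    rw [Finset.mul_sum]
    have hcard : Multiset.card (β ::ₘ s) = m + 1 := by rw [Multiset.card_cons, hm]
    rw [hcard]
    rw [Finset.sum_range_succ' (fun k => ((m+1:ℕ):ℂ) * (f.coeff k * (β ::ₘ s).esymm k / ((m+1).choose k : ℂ))) (m+1),
        Finset.sum_range_succ' A (m+1)]
    have h0 : ((m+1:ℕ):ℂ) * (f.coeff 0 * (β ::ₘ s).esymm 0 / ((m+1).choose 0 : ℂ)) = A 0 := by
      simp [hA, hF, he, Multiset.esymm, Multiset.powersetCard_zero_left]
    rw [h0]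
    have hterm : ∀ k ∈ Finset.range (m+1),
        ((m+1:ℕ):ℂ) * (f.coeff (k+1) * (β ::ₘ s).esymm (k+1) / ((m+1).choose (k+1) : ℂ))
          = A (k+1) + B k := by
      intro k hk
      rw [esymm_cons, hA, hB]
      ring
    rw [Finset.sum_congr rfl hterm, Finset.sum_add_distrib]
    ring
  rw [hL, hR, hAext]

lemma sq_pos_of_ne (y : ℂ) (hy : y ≠ 0) : 0 < y.re^2 + y.im^2 := by
  have := Complex.normSq_pos.mpr hy
  rw [Complex.normSq_apply] at this
  nlinarith

lemma core (P : ℝ → Prop)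
    (Pmono : ∀ {x y : ℝ}, x ≤ y → P y → P x)
    (Psmul : ∀ {c x : ℝ}, 0 < c → P x → P (c*x))
    (Pnot : ∀ {x : ℝ}, ¬ P x → 0 ≤ x)
    (α : ℝ) (γ : ℂ) (δ : ℝ) (hα : 0 ≤ α) :
    ∀ (s : Multiset ℂ) (f : Polynomial ℂ), f ≠ 0 → f.natDegree = Multiset.card s →
    (∀ z : ℂ, f.IsRoot z → P (Qf α γ δ z)) →
    (∀ b ∈ s, ¬ P (Qf α γ δ b)) →
    Phi f s ≠ 0 := by
  intro s
  induction s using Multiset.induction_on with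
  | empty =>
    intro f hf0 hdeg _ _
    have h := Polynomial.eq_C_of_natDegree_eq_zero (by simpa using hdeg)
    have hc : f.coeff 0 ≠ 0 := fun hc => hf0 (by rw [h, hc, map_zero])
    simpa [Phi, Multiset.esymm] using hc
  | cons β s ih =>
    intro f hf0 hdeg hroots hout
    set m := Multiset.card s with hmdef
    have hdeg' : f.natDegree = m + 1 := by simpa [Multiset.card_cons] using hdeg
    have hn0 : ((m+1:ℕ):ℂ) ≠ 0 := Nat.cast_ne_zero.mpr (Nat.succ_ne_zero m)
    set g1 := C ((m+1:ℕ):ℂ) * f + (C β - X) * derivative f with hg1def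
    have hsplit0 : Multiset.card f.roots = f.natDegree :=
      Polynomial.splits_iff_card_roots.mp (IsAlgClosed.splits f)
    have hsplit : Multiset.card f.roots = m + 1 := hsplit0.trans hdeg'
    have hlc : f.leadingCoeff ≠ 0 := Polynomial.leadingCoeff_ne_zero.mpr hf0
    have hrootsne : f.roots ≠ 0 := by
      intro h
      rw [h] at hsplit
      simp at hsplit
    have hrootsP : ∀ z ∈ f.roots, P (Qf α γ δ z) :=
      fun z hz => hroots z (Polynomial.mem_roots'.mp hz).2
    -- degree bound for g1
    have hble : g1.natDegree ≤ m := by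
      rw [Polynomial.natDegree_le_iff_coeff_eq_zero]
      intro N hN
      rw [hg1def, g1_coeff]
      have h1 : f.coeff (N+1) = 0 :=
        Polynomial.coeff_eq_zero_of_natDegree_lt (by omega)
      have h2 : f.coeff N = 0 ∨ ((m+1:ℕ):ℂ) = (N:ℂ) := by
        rcases eq_or_lt_of_le (Nat.succ_le_of_lt hN) with h | h
        · right; exact_mod_cast h
        · left; exact Polynomial.coeff_eq_zero_of_natDegree_lt (by omega)
      rcases h2 with h2 | h2 <;> rw [h1, h2] <;> ring
    -- leading coefficient of g1 is nonzero
    have hcn : g1.coeff m = f.coeff m + ((m+1:ℕ):ℂ)*β*f.coeff (m+1) := by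
      rw [hg1def, g1_coeff]
      push_cast
      ring
    have hfcn : f.coeff (m+1) = f.leadingCoeff := by
      rw [← hdeg']; rfl
    have hc_ne : g1.coeff m ≠ 0 := by
      intro hc0
      have hv : f.coeff m = f.leadingCoeff * (-1)^1 * f.roots.esymm 1 := by
        have h := Polynomial.coeff_eq_esymm_roots_of_card hsplit0 (k := m)
          (by rw [hdeg']; omega)
        rw [hdeg'] at h
        simpa using h
      rw [esymm_one'] at hv
      have hβ : β = f.roots.sum / ((m+1:ℕ):ℂ) := by
        rw [hcn, hv, hfcn] at hc0
        have h2 : f.leadingCoeff * (((m+1:ℕ):ℂ) * β) = f.leadingCoeff * f.roots.sum := by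
          linear_combination hc0
        have h3 := mul_left_cancel₀ hlc h2
        rw [eq_div_iff hn0]
        linear_combination h3
      apply hout β (Multiset.mem_cons_self β s)
      rw [hβ, ← hsplit]
      exact Qf_avg P (fun h => Pmono h) hα f.roots hrootsne hrootsP
    have hg1deg : g1.natDegree = m :=
      le_antisymm hble (Polynomial.le_natDegree_of_ne_zero hc_ne)
    have hg10 : g1 ≠ 0 := fun h => hc_ne (by rw [h]; simp)
    -- Laguerre: roots of g1 lie in K
    have hg1roots : ∀ z : ℂ, g1.IsRoot z → P (Qf α γ δ z) := by
      intro w hw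
      by_contra hPw
      have hfw : eval w f ≠ 0 := fun h => hPw (hroots w h)
      have hwa : ∀ a ∈ f.roots, w ≠ a := by
        intro a ha heq
        exact hfw (by rw [heq]; exact (Polynomial.mem_roots'.mp ha).2)
      have hfact := Polynomial.C_leadingCoeff_mul_prod_multiset_X_sub_C hsplit0
      set pr := (f.roots.map fun a => X - C a).prod with hpr
      set T : ℂ := (f.roots.map fun a => (w - a)⁻¹).sum with hT
      have hder : eval w (derivative f) = eval w f * T := by
        conv_lhs => rw [← hfact]
        rw [Polynomial.derivative_C_mul, eval_mul, eval_C, deriv_eval w f.roots hwa]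
        conv_rhs => rw [← hfact]
        simp only [eval_mul, eval_C]
        ring
      have heval0 : ((m+1:ℕ):ℂ) * eval w f + (β - w) * (eval w f * T) = 0 := by
        have := hw
        rw [Polynomial.IsRoot, hg1def] at this
        simpa [eval_add, eval_mul, eval_sub, eval_C, eval_X, hder] using this
      have hkey : (w - β) * T = ((m+1:ℕ):ℂ) := by
        have h2 : eval w f * ((w - β) * T) = eval w f * ((m+1:ℕ):ℂ) := by
          linear_combination -heval0
        exact mul_left_cancel₀ hfw h2
      have hwβ : w - β ≠ 0 := by
        intro h
        rw [h, zero_mul] at hkey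
        exact hn0 hkey.symm
      have hT0 : T ≠ 0 := by
        intro h
        rw [h, mul_zero] at hkey
        exact hn0 hkey.symm
      have hα' : 0 ≤ Qf α γ δ w := Pnot hPw
      set γ' : ℂ := -2*(α:ℂ)*w - (starRingEnd ℂ) γ with hγ'
      have hmemS : ∀ y ∈ f.roots.map (fun a => (w - a)⁻¹), P (Qf (Qf α γ δ w) γ' α y) := by
        intro y hy
        obtain ⟨a, ha, rfl⟩ := Multiset.mem_map.mp hy
        have hwa' : w - a ≠ 0 := sub_ne_zero.mpr (hwa a ha)
        have hinv : (w - a)⁻¹ ≠ 0 := inv_ne_zero hwa'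
        have hid := Qf_inv α δ γ w ((w - a)⁻¹) hinv
        have hback : w - 1/((w - a)⁻¹) = a := by
          rw [one_div, inv_inv]; ring
        rw [hγ', hid, hback, mul_comm]
        exact Psmul (sq_pos_of_ne _ hinv) (hrootsP a ha)
      have hmapne : f.roots.map (fun a => (w - a)⁻¹) ≠ 0 := by
        intro h
        apply hrootsne
        simpa using congrArg Multiset.card h
      have havg := Qf_avg P (fun h => Pmono h) hα' (f.roots.map (fun a => (w - a)⁻¹)) hmapne hmemS
      rw [Multiset.card_map, hsplit] at havg
      have hTn : T / ((m+1:ℕ):ℂ) = 1/(w - β) := by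
        rw [← hkey]
        field_simp
      rw [← hT, hTn] at havg
      have hy0 : (1/(w - β)) ≠ 0 := one_div_ne_zero hwβ
      have hid2 := Qf_inv α δ γ w (1/(w - β)) hy0
      have hback2 : w - 1/(1/(w - β)) = β := by
        rw [one_div_one_div]; ring
      rw [hγ'] at havg
      rw [hid2, hback2] at havg
      apply hout β (Multiset.mem_cons_self β s)
      have hNpos := sq_pos_of_ne _ hy0
      have : Qf α γ δ β = ((1/(w - β)).re^2 + (1/(w - β)).im^2)⁻¹
          * (Qf α γ δ β * ((1/(w - β)).re^2 + (1/(w - β)).im^2)) := by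
        field_simp
      rw [this]
      exact Psmul (by positivity) havg
    -- apply IH
    have hΦ := ih g1 hg10 hg1deg hg1roots (fun b hb => hout b (Multiset.mem_cons_of_mem hb))
    intro h0
    apply hΦ
    have hpolar := Phi_polar f β s
    rw [← hmdef] at hpolar
    rw [← hg1def] at hpolar
    rw [hpolar, h0, mul_zero]

lemma roots_card_eq (h : Polynomial ℂ) (n : ℕ) (hn : h.natDegree = n) :
    Multiset.card h.roots = n :=
  (Polynomial.splits_iff_card_roots.mp (IsAlgClosed.splits h)).trans hn

lemma apolar_to_Phi (n : ℕ) (f g : Polynomial ℂ) (hgn : g.natDegree = n)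
    (hgc : g.coeff n ≠ 0) :
    apolarSum n f g = (-1)^n * g.coeff n * Phi f g.roots := by
  have hsplit : Multiset.card g.roots = n := roots_card_eq g n hgn
  have hlc : g.leadingCoeff = g.coeff n := by rw [← hgn]; rfl
  unfold apolarSum Phi
  rw [hsplit, Finset.mul_sum]
  apply Finset.sum_congr rfl
  intro k hk
  have hk' : k ≤ n := Nat.lt_succ_iff.mp (Finset.mem_range.mp hk)
  have hco : g.coeff (n - k) = g.coeff n * (-1)^k * g.roots.esymm k := by
    have h := Polynomial.coeff_eq_esymm_roots_of_card
      ((Polynomial.splits_iff_card_roots.mp (IsAlgClosed.splits g)))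
      (k := n - k) (by rw [hgn]; omega)
    rw [hgn] at h
    rw [hlc] at h
    have h2 : n - (n - k) = k := by omega
    rw [h2] at h
    exact h
  rw [hco]
  have hsign : ((-1:ℂ))^(n-k) * (-1)^k = (-1)^n := by
    rw [← pow_add, Nat.sub_add_cancel hk']
  linear_combination (f.coeff k * g.coeff n * g.roots.esymm k / ((n.choose k : ℕ):ℂ)) * hsign

lemma apolar_swap (n : ℕ) (f g : Polynomial ℂ) :
    apolarSum n g f = (-1)^n * apolarSum n f g := by
  unfold apolarSum
  rw [Finset.mul_sum, ← Finset.sum_range_reflect]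
  apply Finset.sum_congr rfl
  intro k hk
  have hk' : k ≤ n := Nat.lt_succ_iff.mp (Finset.mem_range.mp hk)
  have h1 : n + 1 - 1 - k = n - k := by omega
  rw [h1]
  have h2 : n - (n - k) = k := by omega
  rw [h2, Nat.choose_symm hk']
  have hsign : ((-1:ℂ))^k = (-1)^n * (-1)^(n-k) := by
    rw [← pow_add]
    have h3 : n + (n - k) = 2*(n-k) + k := by omega
    rw [h3, pow_add, pow_mul, neg_one_sq, one_pow, one_mul]
  rw [hsign]
  ring

lemma disk_mem_le (p z : ℂ) (r : ℝ) (hr : 0 < r) :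
    ‖z - p‖ ≤ r ↔
      Qf 1 (-2 * (starRingEnd ℂ) p) (p.re^2 + p.im^2 - r^2) z ≤ 0 := by
  have h1 : (‖z-p‖)^2 = (z.re-p.re)^2 + (z.im-p.im)^2 := by
    rw [Complex.sq_norm, Complex.normSq_apply]
    simp [Complex.sub_re, Complex.sub_im]
    ring
  have h2 : Qf 1 (-2 * (starRingEnd ℂ) p) (p.re^2 + p.im^2 - r^2) z
      = (‖z-p‖)^2 - r^2 := by
    rw [h1]
    simp [Qf, Complex.mul_re, Complex.mul_im, Complex.conj_re, Complex.conj_im]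
    ring
  rw [h2, sub_nonpos]
  exact (pow_le_pow_iff_left₀ (norm_nonneg _) hr.le two_ne_zero).symm

lemma disk_mem_lt (p z : ℂ) (r : ℝ) (hr : 0 < r) :
    ‖z - p‖ < r ↔
      Qf 1 (-2 * (starRingEnd ℂ) p) (p.re^2 + p.im^2 - r^2) z < 0 := by
  have h1 : (‖z-p‖)^2 = (z.re-p.re)^2 + (z.im-p.im)^2 := by
    rw [Complex.sq_norm, Complex.normSq_apply]
    simp [Complex.sub_re, Complex.sub_im]
    ring
  have h2 : Qf 1 (-2 * (starRingEnd ℂ) p) (p.re^2 + p.im^2 - r^2) z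
      = (‖z-p‖)^2 - r^2 := by
    rw [h1]
    simp [Qf, Complex.mul_re, Complex.mul_im, Complex.conj_re, Complex.conj_im]
    ring
  rw [h2, sub_neg]
  exact (pow_lt_pow_iff_left₀ (norm_nonneg _) hr.le two_ne_zero).symm

lemma halfplane_mem (u v z : ℂ) :
    (u * z + v).im = Qf 0 (-Complex.I * u) v.im z := by
  simp [Qf, Complex.add_im, Complex.mul_re, Complex.mul_im, Complex.I_re, Complex.I_im]
  ring

/-- Grace's Apolarity Theorem: if `f` and `g` are apolar polynomials of degree
`n` and every root of `g` lies in a circular region `A`, then `f` has at least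
one root in `A`. -/
theorem grace_apolarity (n : ℕ) (f g : Polynomial ℂ)
    (hfn : f.natDegree = n) (hgn : g.natDegree = n)
    (hap : Apolar n f g)
    (A : Set ℂ) (hA : CircularRegion A)
    (hg : ∀ z : ℂ, g.eval z = 0 → z ∈ A) :
    ∃ z : ℂ, f.eval z = 0 ∧ z ∈ A := by
  by_contra hcon
  push_neg at hcon
  obtain ⟨hab, hsum⟩ := hap
  have hfc : f.coeff n ≠ 0 := left_ne_zero_of_mul hab
  have hgc : g.coeff n ≠ 0 := right_ne_zero_of_mul hab
  have hf0 : f ≠ 0 := fun h => hfc (by simp [h])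
  have hg0 : g ≠ 0 := fun h => hgc (by simp [h])
  have hfr : Multiset.card f.roots = n := roots_card_eq f n hfn
  have hgr : Multiset.card g.roots = n := roots_card_eq g n hgn
  have hPhif : Phi f g.roots = 0 := by
    have h := apolar_to_Phi n f g hgn hgc
    rw [hsum] at h
    have h2 : ((-1:ℂ))^n * g.coeff n ≠ 0 := mul_ne_zero (pow_ne_zero _ (by norm_num)) hgc
    exact (mul_eq_zero.mp h.symm).resolve_left h2
  have hPhig : Phi g f.roots = 0 := by
    have hs : apolarSum n g f = 0 := by rw [apolar_swap, hsum, mul_zero]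
    have h := apolar_to_Phi n g f hfn hfc
    rw [hs] at h
    have h2 : ((-1:ℂ))^n * f.coeff n ≠ 0 := mul_ne_zero (pow_ne_zero _ (by norm_num)) hfc
    exact (mul_eq_zero.mp h.symm).resolve_left h2
  have hfA : ∀ z : ℂ, f.IsRoot z → z ∉ A := fun z hz => hcon z hz
  have hgA : ∀ z ∈ g.roots, z ∈ A := fun z hz => hg z (Polynomial.mem_roots'.mp hz).2
  have hfA' : ∀ z ∈ f.roots, z ∉ A := fun z hz => hfA z (Polynomial.mem_roots'.mp hz).2
  have hgA' : ∀ z : ℂ, g.IsRoot z → z ∈ A := fun z hz => hg z hz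
  have leMono : ∀ {x y : ℝ}, x ≤ y → y ≤ 0 → x ≤ 0 := fun h1 h2 => le_trans h1 h2
  have leSmul : ∀ {c x : ℝ}, 0 < c → x ≤ 0 → c*x ≤ 0 := fun hc hx => by nlinarith
  have ltMono : ∀ {x y : ℝ}, x ≤ y → y < 0 → x < 0 := fun h1 h2 => lt_of_le_of_lt h1 h2
  have ltSmul : ∀ {c x : ℝ}, 0 < c → x < 0 → c*x < 0 := fun hc hx => mul_neg_of_pos_of_neg hc hx
  have leNot : ∀ {x : ℝ}, ¬ x ≤ 0 → 0 ≤ x := fun h => (not_le.mp h).le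
  have ltNot : ∀ {x : ℝ}, ¬ x < 0 → 0 ≤ x := fun h => not_lt.mp h
  rcases hA with ⟨p,r,hr,rfl⟩|⟨p,r,hr,rfl⟩|⟨p,r,hr,rfl⟩|⟨p,r,hr,rfl⟩|⟨u,v,hu,rfl⟩|⟨u,v,hu,rfl⟩
  · -- open disk: apply core to g with region A itself (strict)
    refine core (fun x => x < 0) ltMono ltSmul ltNot 1 (-2 * (starRingEnd ℂ) p)
      (p.re^2+p.im^2-r^2) zero_le_one f.roots g hg0 (hgn.trans hfr.symm) ?_ ?_ hPhig
    · intro z hz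
      exact (disk_mem_lt p z r hr).mp (hgA' z hz)
    · intro b hb hQ
      exact hfA' b hb ((disk_mem_lt p b r hr).mpr hQ)
  · -- closed disk
    refine core (fun x => x ≤ 0) leMono leSmul leNot 1 (-2 * (starRingEnd ℂ) p)
      (p.re^2+p.im^2-r^2) zero_le_one f.roots g hg0 (hgn.trans hfr.symm) ?_ ?_ hPhig
    · intro z hz
      exact (disk_mem_le p z r hr).mp (hgA' z hz)
    · intro b hb hQ
      exact hfA' b hb ((disk_mem_le p b r hr).mpr hQ)
  · -- open exterior: complement is closed disk
    refine core (fun x => x ≤ 0) leMono leSmul leNot 1 (-2 * (starRingEnd ℂ) p)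
      (p.re^2+p.im^2-r^2) zero_le_one g.roots f hf0 (hfn.trans hgr.symm) ?_ ?_ hPhif
    · intro z hz
      have h1 := hfA z hz
      have h2 : ‖z - p‖ ≤ r := not_lt.mp (by simpa using h1)
      exact (disk_mem_le p z r hr).mp h2
    · intro b hb hQ
      have hbA := hgA b hb
      have h2 : ‖b - p‖ ≤ r := (disk_mem_le p b r hr).mpr hQ
      simp only [Set.mem_setOf_eq] at hbA
      linarith
  · -- closed exterior: complement is open disk
    refine core (fun x => x < 0) ltMono ltSmul ltNot 1 (-2 * (starRingEnd ℂ) p)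
      (p.re^2+p.im^2-r^2) zero_le_one g.roots f hf0 (hfn.trans hgr.symm) ?_ ?_ hPhif
    · intro z hz
      have h1 := hfA z hz
      have h2 : ‖z - p‖ < r := not_le.mp (by simpa using h1)
      exact (disk_mem_lt p z r hr).mp h2
    · intro b hb hQ
      have hbA := hgA b hb
      have h2 : ‖b - p‖ < r := (disk_mem_lt p b r hr).mpr hQ
      simp only [Set.mem_setOf_eq] at hbA
      linarith
  · -- open halfplane: complement is closed halfplane
    refine core (fun x => x ≤ 0) leMono leSmul leNot 0 (-Complex.I*u) v.im le_rfl
      g.roots f hf0 (hfn.trans hgr.symm) ?_ ?_ hPhif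
    · intro z hz
      have h1 := hfA z hz
      rw [← halfplane_mem]
      exact not_lt.mp (by simpa using h1)
    · intro b hb hQ
      have hbA := hgA b hb
      rw [← halfplane_mem] at hQ
      simp only [Set.mem_setOf_eq] at hbA
      linarith
  · -- closed halfplane: complement is open halfplane
    refine core (fun x => x < 0) ltMono ltSmul ltNot 0 (-Complex.I*u) v.im le_rfl
      g.roots f hf0 (hfn.trans hgr.symm) ?_ ?_ hPhif
    · intro z hz
      have h1 := hfA z hz
      rw [← halfplane_mem]
      exact not_le.mp (by simpa using h1)
    · intro b hb hQ
      have hbA := hgA b hb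
      rw [← halfplane_mem] at hQ
      simp only [Set.mem_setOf_eq] at hbA
      linarith
end
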